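/- arXiv:1407.2842 — 6 statements merged into one kernel-verified Lean document; each statement's English description precedes it below -/
import Mathlib

section
/- Let $X$ be a Fréchet space and let $A : X \to \mathbb{R}$ be a function satisfying: (1) $A$ is the pointwise limit of a sequence of continuous functions $X \to \mathbb{R}$; (2) $A(x - y) \le \max\{A(x), A(y)\}$ for all $x, y \in X$; (3) $A(c x) = A(x)$ for all $x \in X$ and all nonzero scalars $c$. Then $A$ is bounded above on $X$ and attains its maximum. -/
open Filter

/-- If `A` satisfies the subadditivity and scaling hypotheses and is bounded by `c` on a
nonempty open set, then it is bounded by `c` everywhere. -/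
lemma baire_aux_spread {𝕜 X : Type*} [RCLike 𝕜] [AddCommGroup X]
    [Module 𝕜 X] [UniformSpace X] [IsUniformAddGroup X] [ContinuousSMul 𝕜 X]
    (A : X → ℝ)
    (h2 : ∀ x y : X, A (x - y) ≤ max (A x) (A y))
    (h3 : ∀ (c : 𝕜) (x : X), c ≠ 0 → A (c • x) = A x)
    {U : Set X} (hU : IsOpen U) {u : X} (hu : u ∈ U) {c : ℝ}
    (hc : ∀ x ∈ U, A x ≤ c) : ∀ x, A x ≤ c := by
  intro x
  have t1 : Tendsto (fun n : ℕ => ((n : 𝕜))⁻¹) atTop (nhds 0) := by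
    have h : Tendsto (fun n : ℕ => (((n : ℝ)⁻¹ : ℝ) : 𝕜)) atTop (nhds ((0 : ℝ) : 𝕜)) :=
      ((RCLike.continuous_ofReal (K := 𝕜)).tendsto (0 : ℝ)).comp
        tendsto_inv_atTop_nhds_zero_nat
    simp only [RCLike.ofReal_inv, RCLike.ofReal_natCast, RCLike.ofReal_zero] at h
    exact h
  have t2 : Tendsto (fun n : ℕ => u + ((n : 𝕜))⁻¹ • x) atTop (nhds u) := by
    have h := (tendsto_const_nhds (x := u)).add (t1.smul_const x)
    simpa using h
  have hev : ∀ᶠ n : ℕ in atTop, u + ((n : 𝕜))⁻¹ • x ∈ U := t2.eventually_mem (hU.mem_nhds hu)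
  obtain ⟨n, hn1, hnU⟩ := ((eventually_ge_atTop 1).and hev).exists
  have hne : ((n : 𝕜))⁻¹ ≠ 0 := by
    simp only [ne_eq, inv_eq_zero, Nat.cast_eq_zero]
    omega
  calc A x = A (((n : 𝕜))⁻¹ • x) := (h3 _ x hne).symm
    _ = A ((u + ((n : 𝕜))⁻¹ • x) - u) := by rw [add_sub_cancel_left]
    _ ≤ max (A (u + ((n : 𝕜))⁻¹ • x)) (A u) := h2 _ _
    _ ≤ c := max_le (hc _ hnU) (hc u hu)

/-- Let `X` be a Fréchet space and `A : X → ℝ` a function that (1) is a pointwise limit of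
continuous functions, (2) satisfies `A (x - y) ≤ max (A x) (A y)`, and (3) is invariant under
nonzero scalings. Then `A` is bounded above and attains its maximum. -/
theorem baire_one_subadditive_attains_max {𝕜 X : Type*} [RCLike 𝕜] [AddCommGroup X]
    [Module 𝕜 X] [Module ℝ X] [IsScalarTower ℝ 𝕜 X] [UniformSpace X] [IsUniformAddGroup X]
    [ContinuousSMul 𝕜 X] [CompleteSpace X] [TopologicalSpace.MetrizableSpace X]
    [LocallyConvexSpace ℝ X]
    (A : X → ℝ)
    (h1 : ∃ f : ℕ → X → ℝ, (∀ n, Continuous (f n)) ∧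
      ∀ x, Tendsto (fun n => f n x) atTop (nhds (A x)))
    (h2 : ∀ x y : X, A (x - y) ≤ max (A x) (A y))
    (h3 : ∀ (c : 𝕜) (x : X), c ≠ 0 → A (c • x) = A x) :
    ∃ x₀ : X, ∀ x : X, A x ≤ A x₀ := by
  obtain ⟨f, hfc, hfl⟩ := h1
  haveI : (uniformity X).IsCountablyGenerated := by
    rw [uniformity_eq_comap_nhds_zero X]
    exact Filter.comap.isCountablyGenerated _ _
  haveI : BaireSpace X := by
    letI m := UniformSpace.pseudoMetricSpace X
    exact BaireSpace.of_completelyPseudoMetrizable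
  haveI : Nonempty X := ⟨0⟩
  -- Step 1: A is bounded above.
  have hbdd : ∃ c : ℝ, ∀ x, A x ≤ c := by
    set S : ℕ → Set X := fun k => ⋂ n, {x | f n x ≤ k} with hS
    have hScl : ∀ k, IsClosed (S k) :=
      fun k => isClosed_iInter fun n => isClosed_le (hfc n) continuous_const
    have hcover : (⋃ k, S k) = Set.univ := by
      ext x
      simp only [hS, Set.mem_iUnion, Set.mem_iInter, Set.mem_setOf_eq, Set.mem_univ, iff_true]
      obtain ⟨b, hb⟩ := (hfl x).bddAbove_range
      obtain ⟨k, hk⟩ := exists_nat_ge b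
      exact ⟨k, fun n => le_trans (hb (Set.mem_range_self n)) hk⟩
    obtain ⟨k, u, hu⟩ := nonempty_interior_of_iUnion_of_closed hScl hcover
    refine ⟨k, baire_aux_spread (𝕜 := 𝕜) A h2 h3 isOpen_interior hu fun x hx => ?_⟩
    refine le_of_tendsto (hfl x) (Eventually.of_forall fun n => ?_)
    exact Set.mem_iInter.1 (interior_subset hx) n
  -- Step 2: A attains its maximum.
  obtain ⟨c, hc⟩ := hbdd
  by_contra hcon
  push_neg at hcon
  set M : ℝ := ⨆ x, A x with hM
  have hbdd' : BddAbove (Set.range A) := ⟨c, fun y ⟨x, hx⟩ => hx ▸ hc x⟩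
  have hAleM : ∀ x, A x ≤ M := fun x => le_ciSup hbdd' x
  have hAltM : ∀ x, A x < M := fun x => by
    obtain ⟨y, hy⟩ := hcon x
    exact lt_of_lt_of_le hy (hAleM y)
  set T : ℕ × ℕ → Set X := fun p =>
    ⋂ n, {x | p.2 ≤ n → f n x ≤ M - 1 / (p.1 + 1)} with hT
  have hTcl : ∀ p, IsClosed (T p) := by
    intro p
    refine isClosed_iInter fun n => ?_
    by_cases h : p.2 ≤ n
    · have : {x | p.2 ≤ n → f n x ≤ M - 1 / (p.1 + 1)} = {x | f n x ≤ M - 1 / (p.1 + 1)} := by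
        ext x; simp [h]
      rw [this]; exact isClosed_le (hfc n) continuous_const
    · have : {x | p.2 ≤ n → f n x ≤ M - 1 / (p.1 + 1)} = Set.univ := by
        ext x; simp [h]
      rw [this]; exact isClosed_univ
  have hTcover : (⋃ p, T p) = Set.univ := by
    ext x
    simp only [hT, Set.mem_iUnion, Set.mem_iInter, Set.mem_setOf_eq, Set.mem_univ, iff_true]
    obtain ⟨m, hm⟩ := exists_nat_one_div_lt (sub_pos.2 (hAltM x))
    have hlt : A x < M - 1 / (m + 1) := by
      have : (1 : ℝ) / (m + 1) < M - A x := hm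
      linarith
    have hev : ∀ᶠ n in atTop, f n x < M - 1 / (m + 1) := (hfl x).eventually_lt_const hlt
    obtain ⟨N, hN⟩ := hev.exists_forall_of_atTop
    exact ⟨(m, N), fun n hn => (hN n hn).le⟩
  obtain ⟨p, u, hu⟩ := nonempty_interior_of_iUnion_of_closed hTcl hTcover
  have hbound : ∀ x, A x ≤ M - 1 / (p.1 + 1) := by
    refine baire_aux_spread (𝕜 := 𝕜) A h2 h3 isOpen_interior hu fun x hx => ?_
    refine le_of_tendsto (hfl x) ?_
    filter_upwards [eventually_ge_atTop p.2] with n hn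
    exact Set.mem_iInter.1 (interior_subset hx) n hn
  have hpos : (0 : ℝ) < 1 / (p.1 + 1) := by positivity
  have : M ≤ M - 1 / (p.1 + 1) := ciSup_le hbound
  linarith
end

section
/- Let $X$ be a Fréchet space and $A : X \to \mathbb{R}$ a pointwise limit of continuous functions with $A(x-y) \le \max\{A(x), A(y)\}$ and $A(cx) = A(x)$ for $c \ne 0$. If $U$ is any subset of $X$ with nonempty interior, then $\sup_{x \in U} A(x) = \sup_{x \in X} A(x)$. -/
open Filter

/-- Let `X` be a Fréchet space and `A : X → ℝ` a pointwise limit of continuous functions with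
`A (x - y) ≤ max (A x) (A y)` and `A (c • x) = A x` for `c ≠ 0`. If `U ⊆ X` has nonempty
interior, then the supremum of `A` over `U` equals the supremum of `A` over `X`
(expressed via equality of the sets of upper bounds). -/
theorem sup_on_set_with_interior_eq_global_sup {𝕜 X : Type*} [RCLike 𝕜] [AddCommGroup X]
    [Module 𝕜 X] [Module ℝ X] [IsScalarTower ℝ 𝕜 X] [UniformSpace X] [IsUniformAddGroup X]
    [ContinuousSMul 𝕜 X] [CompleteSpace X] [TopologicalSpace.MetrizableSpace X]
    [LocallyConvexSpace ℝ X]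
    (A : X → ℝ)
    (h1 : ∃ f : ℕ → X → ℝ, (∀ n, Continuous (f n)) ∧
      ∀ x, Tendsto (fun n => f n x) atTop (nhds (A x)))
    (h2 : ∀ x y : X, A (x - y) ≤ max (A x) (A y))
    (h3 : ∀ (c : 𝕜) (x : X), c ≠ 0 → A (c • x) = A x)
    (U : Set X) (hU : (interior U).Nonempty) :
    ∀ M : ℝ, (∀ x ∈ U, A x ≤ M) ↔ (∀ x : X, A x ≤ M) := by
  intro M
  constructor
  · intro hM x
    obtain ⟨u₀, hu₀⟩ := hU
    have h0 : Tendsto (fun n : ℕ => (n : 𝕜)⁻¹ • x + u₀) atTop (nhds u₀) := by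
      have hc : Tendsto (fun n : ℕ => ((n : 𝕜)⁻¹)) atTop (nhds 0) := by
        rw [tendsto_zero_iff_norm_tendsto_zero]
        simpa using tendsto_one_div_atTop_nhds_zero_nat (𝕜 := ℝ)
      simpa using (hc.smul_const x).add_const u₀
    have hV : ∀ᶠ n : ℕ in atTop, (n : 𝕜)⁻¹ • x + u₀ ∈ interior U :=
      h0.eventually (isOpen_interior.eventually_mem hu₀)
    obtain ⟨n, hn, hnpos⟩ := (hV.and (eventually_gt_atTop 0)).exists
    have hc : ((n : 𝕜))⁻¹ ≠ 0 := inv_ne_zero (Nat.cast_ne_zero.mpr hnpos.ne')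
    calc A x = A ((n : 𝕜)⁻¹ • x) := (h3 _ x hc).symm
      _ = A (((n : 𝕜)⁻¹ • x + u₀) - u₀) := by rw [add_sub_cancel_right]
      _ ≤ max (A ((n : 𝕜)⁻¹ • x + u₀)) (A u₀) := h2 _ _
      _ ≤ M := max_le (hM _ (interior_subset hn)) (hM _ (interior_subset hu₀))
  · intro h x _
    exact h x
end

section
/- Let $X$ be a Fréchet space, $(y_n)$ a sequence in $X'$, and suppose that for each $x \in X$ the finite part limit of $\langle y_n, x\rangle$ exists, with infinite parts $\sum_{\alpha>0} n^{\alpha} R_{\alpha}(x)$. Define $A(x) = 0$ if the infinite part of $\langle y_n, x\rangle$ vanishes and $A(x) = \max\{\alpha > 0 : R_{\alpha}(x) \ne 0\}$ otherwise. Then $A(x) = \lim_{n\to\infty} \frac{\ln(|\langle y_n, x\rangle| + 1)}{\ln n}$ for every $x \in X$. -/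
open Filter

/-- A standard finite-part decomposition of a scalar sequence. -/
def FPDecomp {K : Type*} [RCLike K] (a : ℕ → K) (R : ℝ →₀ K) (z : ℕ → K) (Y : K) : Prop :=
  (∀ α ∈ R.support, (0 : ℝ) < α) ∧
  (∀ n : ℕ, a n = ∑ α ∈ R.support, ((n : ℝ) ^ α) • R α + z n) ∧
  Tendsto z atTop (nhds Y)

/-- Let `X` be a Fréchet space, `(y n)` a sequence in `X'` whose evaluations all admit finite
part limits, with coefficients `R x` and finite parts `z x`.  Let `A x` be the largest exponent
appearing in the infinite part of `⟨yₙ, x⟩` (and `0` if the infinite part vanishes). Then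
`A x = lim_{n} ln(|⟨yₙ, x⟩| + 1) / ln n` for every `x`. -/
theorem top_exponent_limit_formula {𝕜 X : Type*} [RCLike 𝕜] [AddCommGroup X]
    [Module 𝕜 X] [Module ℝ X] [IsScalarTower ℝ 𝕜 X] [UniformSpace X] [IsUniformAddGroup X]
    [ContinuousSMul 𝕜 X] [CompleteSpace X] [TopologicalSpace.MetrizableSpace X]
    [LocallyConvexSpace ℝ X]
    (y : ℕ → X →L[𝕜] 𝕜) (R : X → ℝ →₀ 𝕜) (z : X → ℕ → 𝕜)
    (hdec : ∀ x : X, ∃ Yx : 𝕜, FPDecomp (fun n => y n x) (R x) (z x) Yx)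
    (A : X → ℝ)
    (hA : ∀ x : X, (R x = 0 → A x = 0) ∧
      (R x ≠ 0 → R x (A x) ≠ 0 ∧ ∀ α ∈ (R x).support, α ≤ A x)) :
    ∀ x : X, Tendsto (fun n : ℕ => Real.log (‖y n x‖ + 1) / Real.log n) atTop (nhds (A x)) := by
  intro x
  obtain ⟨Y, hpos, heq, hz⟩ := hdec x
  have hlogn : Tendsto (fun n : ℕ => Real.log n) atTop atTop :=
    Real.tendsto_log_atTop.comp tendsto_natCast_atTop_atTop
  by_cases hR : R x = 0
  · -- trivial infinite part
    have hA0 := (hA x).1 hR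
    rw [hA0]
    have ha : ∀ n, y n x = z x n := by
      intro n
      have := heq n
      rw [hR] at this
      simpa using this
    have h1 : Tendsto (fun n : ℕ => ‖y n x‖ + 1) atTop (nhds (‖Y‖ + 1)) := by
      simp only [ha]
      exact hz.norm.add tendsto_const_nhds
    have hlog : Tendsto (fun n : ℕ => Real.log (‖y n x‖ + 1)) atTop
        (nhds (Real.log (‖Y‖ + 1))) :=
      ((Real.continuousAt_log (by positivity)).tendsto.comp h1)
    exact hlog.div_atTop hlogn
  · obtain ⟨hRA, hmax⟩ := (hA x).2 hR
    set α := A x with hαdef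
    have hαS : α ∈ (R x).support := Finsupp.mem_support_iff.2 hRA
    have hα0 : 0 < α := hpos α hαS
    -- the scaled sequence converges to the top coefficient
    have hsum : Tendsto (fun n : ℕ => ∑ β ∈ (R x).support, ((n : ℝ) ^ (β - α)) • R x β)
        atTop (nhds (R x α)) := by
      have hterm : ∀ β ∈ (R x).support,
          Tendsto (fun n : ℕ => ((n : ℝ) ^ (β - α)) • R x β) atTop
            (nhds (if β = α then R x β else 0)) := by
        intro β hβ
        by_cases hβα : β = α
        · simp [hβα, Real.rpow_zero]
        · have hlt : β < α := lt_of_le_of_ne (hmax β hβ) hβα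
          have h0 : Tendsto (fun n : ℕ => ((n : ℝ) ^ (β - α))) atTop (nhds 0) := by
            have := (tendsto_rpow_neg_atTop (by linarith : (0:ℝ) < α - β)).comp
              (tendsto_natCast_atTop_atTop (R := ℝ))
            simpa [Function.comp_def, neg_sub] using this
          simpa [hβα] using h0.smul_const (R x β)
      have := tendsto_finset_sum _ hterm
      simpa [Finset.sum_ite_eq' ((R x).support) α, hαS] using this
    have hzero : Tendsto (fun n : ℕ => ((n : ℝ) ^ (-α)) • z x n) atTop (nhds 0) := by
      have h0 : Tendsto (fun n : ℕ => ((n : ℝ) ^ (-α))) atTop (nhds 0) :=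
        (tendsto_rpow_neg_atTop hα0).comp (tendsto_natCast_atTop_atTop (R := ℝ))
      simpa using h0.smul hz
    have hscaled : Tendsto (fun n : ℕ => ((n : ℝ) ^ (-α)) • (y n x)) atTop (nhds (R x α)) := by
      have hev : (fun n : ℕ => ((n : ℝ) ^ (-α)) • (y n x)) =ᶠ[atTop]
          (fun n : ℕ => (∑ β ∈ (R x).support, ((n : ℝ) ^ (β - α)) • R x β)
            + ((n : ℝ) ^ (-α)) • z x n) := by
        filter_upwards [eventually_ge_atTop 1] with n hn
        have hn0 : (0:ℝ) < (n:ℝ) := by exact_mod_cast hn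
        have h : y n x = ∑ β ∈ (R x).support, ((n : ℝ) ^ β) • R x β + z x n := heq n
        rw [h, smul_add, Finset.smul_sum]
        congr 1
        refine Finset.sum_congr rfl fun β hβ => ?_
        rw [smul_smul, ← Real.rpow_add hn0]
        ring_nf
      rw [tendsto_congr' hev]
      simpa using hsum.add hzero
    -- norms
    set L : ℝ := ‖R x α‖ with hLdef
    have hL0 : 0 < L := norm_pos_iff.2 hRA
    have hnorm : Tendsto (fun n : ℕ => ((n : ℝ) ^ (-α)) * ‖y n x‖) atTop (nhds L) := by
      have := hscaled.norm
      refine this.congr fun n => ?_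
      rw [norm_smul, Real.norm_eq_abs, abs_of_nonneg (Real.rpow_nonneg (n.cast_nonneg) _)]
    have h0' : Tendsto (fun n : ℕ => ((n : ℝ) ^ (-α))) atTop (nhds 0) :=
      (tendsto_rpow_neg_atTop hα0).comp (tendsto_natCast_atTop_atTop (R := ℝ))
    have hg : Tendsto (fun n : ℕ => (‖y n x‖ + 1) * ((n : ℝ) ^ (-α))) atTop (nhds L) := by
      have := hnorm.add h0'
      rw [add_zero] at this
      refine this.congr fun n => ?_
      ring
    have hlogg : Tendsto (fun n : ℕ => Real.log ((‖y n x‖ + 1) * ((n : ℝ) ^ (-α)))) atTop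
        (nhds (Real.log L)) :=
      (Real.continuousAt_log (ne_of_gt hL0)).tendsto.comp hg
    have hquot : Tendsto (fun n : ℕ =>
        Real.log ((‖y n x‖ + 1) * ((n : ℝ) ^ (-α))) / Real.log n + α) atTop (nhds α) := by
      have := (hlogg.div_atTop hlogn).add (tendsto_const_nhds (x := α))
      simpa using this
    refine hquot.congr' ?_
    filter_upwards [eventually_ge_atTop 2] with n hn
    have hn0 : (0:ℝ) < (n:ℝ) := by
      have : (2:ℝ) ≤ (n:ℝ) := by exact_mod_cast hn
      linarith
    have hlognpos : 0 < Real.log n := Real.log_pos (by exact_mod_cast hn.trans_lt' one_lt_two)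
    have ha1 : (0:ℝ) < ‖y n x‖ + 1 := by positivity
    rw [Real.log_mul (ne_of_gt ha1) (ne_of_gt (Real.rpow_pos_of_pos hn0 _)),
      Real.log_rpow hn0]
    field_simp
    ring
end

section
/- Let $X$ be a Fréchet space, $(y_n)$ a sequence in $X'$, and suppose that for each $x \in X$ the finite part limit of $\langle y_n, x\rangle$ exists. Define $A(x) = \max\{\alpha > 0 : R_{\alpha}(x) \ne 0\}$ (or $0$ if the infinite part vanishes). Then $A$ is bounded above on $X$ and attains its maximum; moreover if $\widetilde{\alpha} = \max_{x \in X} A(x) > 0$ then $R_{\widetilde{\alpha}}$ is a nonzero continuous linear functional on $X$, given by $R_{\widetilde{\alpha}}(x) = \lim_{n\to\infty} n^{-\widetilde{\alpha}} \langle y_n, x\rangle$. -/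
open Filter

section Aux

open Topology

variable {K : Type*} [RCLike K]

/-- Step A : the scaled sequence `n^{-β} • a n` converges to `R β` whenever `β` is positive
and dominates every exponent of the infinite part. -/
lemma FPDecomp.tendsto_scaled {a : ℕ → K} {R : ℝ →₀ K} {z : ℕ → K} {Y : K}
    (h : FPDecomp a R z Y) {β : ℝ} (hβ : 0 < β) (hsup : ∀ α ∈ R.support, α ≤ β) :
    Tendsto (fun n : ℕ => ((n : ℝ) ^ (-β)) • a n) atTop (𝓝 (R β)) := by
  obtain ⟨hpos, heq, hz⟩ := h
  have h0 : Tendsto (fun n : ℕ => ((n : ℝ) ^ (-β))) atTop (𝓝 0) :=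
    (tendsto_rpow_neg_atTop hβ).comp tendsto_natCast_atTop_atTop
  have h1 : Tendsto (fun n : ℕ => ∑ α ∈ R.support, ((n : ℝ) ^ (α - β)) • R α) atTop
      (𝓝 (∑ α ∈ R.support, if α = β then R α else 0)) := by
    refine tendsto_finset_sum _ (fun α hα => ?_)
    by_cases hab : α = β
    · subst hab
      simp only [sub_self, if_pos rfl]
      have : (fun n : ℕ => ((n : ℝ) ^ (0 : ℝ)) • R α) = fun _ => R α := by
        funext n; rw [Real.rpow_zero, one_smul]
      rw [this]
      exact tendsto_const_nhds
    · rw [if_neg hab]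
      have hlt : (0 : ℝ) < β - α := sub_pos.mpr (lt_of_le_of_ne (hsup α hα) hab)
      have ht : Tendsto (fun n : ℕ => ((n : ℝ) ^ (α - β))) atTop (𝓝 0) := by
        have := (tendsto_rpow_neg_atTop hlt).comp
          (tendsto_natCast_atTop_atTop (R := ℝ))
        simpa [neg_sub, Function.comp_def] using this
      simpa using ht.smul_const (R α)
  have hsum : (∑ α ∈ R.support, if α = β then R α else 0) = R β := by
    rw [Finset.sum_ite_eq' R.support β (fun α => R α)]
    by_cases hb : β ∈ R.support
    · rw [if_pos hb]
    · rw [if_neg hb]; exact (Finsupp.notMem_support_iff.mp hb).symm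
  have key : Tendsto
      (fun n : ℕ => ∑ α ∈ R.support, ((n : ℝ) ^ (α - β)) • R α + ((n : ℝ) ^ (-β)) • z n)
      atTop (𝓝 (R β)) := by
    have := h1.add (h0.smul hz)
    rw [hsum] at this
    simpa using this
  refine Tendsto.congr' ?_ key
  filter_upwards [eventually_ge_atTop 1] with n hn
  have hn' : (0 : ℝ) < (n : ℝ) := by exact_mod_cast hn
  rw [heq n, smul_add, Finset.smul_sum]
  congr 1
  refine Finset.sum_congr rfl (fun α hα => ?_)
  rw [smul_smul, ← Real.rpow_add hn', show -β + α = α - β by ring]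

/-- If the top exponent `β` has a nonzero coefficient, then `‖a n‖` cannot be
dominated by `C ⬝ n^k` for any `k < β`. -/
lemma FPDecomp.not_bdd {a : ℕ → K} {R : ℝ →₀ K} {z : ℕ → K} {Y : K}
    (h : FPDecomp a R z Y) {β k : ℝ} (hβ : 0 < β) (hRβ : R β ≠ 0)
    (hsup : ∀ α ∈ R.support, α ≤ β) (hk : k < β) {C : ℝ}
    (hC : ∀ n : ℕ, 1 ≤ n → ‖a n‖ ≤ C * (n : ℝ) ^ k) : False := by
  have ht := (h.tendsto_scaled hβ hsup).norm
  have h2 : Tendsto (fun n : ℕ => C * (n : ℝ) ^ (k - β)) atTop (𝓝 0) := by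
    have h3 : Tendsto (fun n : ℕ => ((n : ℝ) ^ (k - β))) atTop (𝓝 0) := by
      have := (tendsto_rpow_neg_atTop (y := β - k) (by linarith)).comp
        (tendsto_natCast_atTop_atTop (R := ℝ))
      simpa [neg_sub, Function.comp_def] using this
    simpa using h3.const_mul C
  have hle : ∀ᶠ n : ℕ in atTop, ‖((n : ℝ) ^ (-β)) • a n‖ ≤ C * (n : ℝ) ^ (k - β) := by
    filter_upwards [eventually_ge_atTop 1] with n hn
    have hn' : (0 : ℝ) < (n : ℝ) := by exact_mod_cast hn
    have hnn : (0 : ℝ) ≤ (n : ℝ) ^ (-β) := Real.rpow_nonneg hn'.le _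
    calc ‖((n : ℝ) ^ (-β)) • a n‖ = (n : ℝ) ^ (-β) * ‖a n‖ := by
          rw [norm_smul, Real.norm_of_nonneg hnn]
      _ ≤ (n : ℝ) ^ (-β) * (C * (n : ℝ) ^ k) := by
          exact mul_le_mul_of_nonneg_left (hC n hn) hnn
      _ = C * ((n : ℝ) ^ (-β) * (n : ℝ) ^ k) := by ring
      _ = C * (n : ℝ) ^ (k - β) := by
          rw [← Real.rpow_add hn', show -β + k = k - β by ring]
  have hfin : ‖R β‖ ≤ 0 := le_of_tendsto_of_tendsto ht h2 hle
  exact hRβ (norm_le_zero_iff.mp hfin)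

end Aux

open Topology

/-- Let `X` be a Fréchet space, `(y n)` a sequence in `X'` whose evaluations all admit finite
part limits, with coefficients `R x`.  Let `A x` be the largest exponent of the infinite part of
`⟨yₙ, x⟩` (and `0` if the infinite part vanishes). Then `A` attains its maximum at some `x₀`;
moreover, if `α̃ = A x₀ > 0`, then `x ↦ R x α̃` is a nonzero continuous linear functional on
`X`, given by `R x α̃ = lim_n n^{-α̃} ⟨yₙ, x⟩`. -/
theorem top_exponent_attains_max_and_top_coefficient_continuous {𝕜 X : Type*} [RCLike 𝕜]
    [AddCommGroup X] [Module 𝕜 X] [Module ℝ X] [IsScalarTower ℝ 𝕜 X]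
    [UniformSpace X] [IsUniformAddGroup X] [ContinuousSMul 𝕜 X] [CompleteSpace X]
    [TopologicalSpace.MetrizableSpace X] [LocallyConvexSpace ℝ X]
    (y : ℕ → X →L[𝕜] 𝕜) (R : X → ℝ →₀ 𝕜) (z : X → ℕ → 𝕜)
    (hdec : ∀ x : X, ∃ Yx : 𝕜, FPDecomp (fun n => y n x) (R x) (z x) Yx)
    (A : X → ℝ)
    (hA : ∀ x : X, (R x = 0 → A x = 0) ∧
      (R x ≠ 0 → R x (A x) ≠ 0 ∧ ∀ α ∈ (R x).support, α ≤ A x)) :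
    ∃ x₀ : X, (∀ x : X, A x ≤ A x₀) ∧
      (0 < A x₀ →
        (∃ Rc : X →L[𝕜] 𝕜, Rc ≠ 0 ∧ ∀ x : X, Rc x = R x (A x₀)) ∧
        ∀ x : X, Tendsto (fun n : ℕ => ((n : ℝ) ^ (-(A x₀))) • y n x)
          atTop (nhds (R x (A x₀)))) := by
  -- the uniformity is countably generated, so `X` is a Baire space and is barrelled
  haveI : (uniformity X).IsCountablyGenerated := by
    rw [uniformity_eq_comap_nhds_zero X]
    infer_instance
  haveI : ContinuousSMul ℝ X := IsScalarTower.continuousSMul (M := ℝ) (α := X) 𝕜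
  -- basic facts about `A`
  have hsupb : ∀ x : X, ∀ α ∈ (R x).support, α ≤ A x := by
    intro x α hα
    by_cases h : R x = 0
    · rw [h] at hα; simp at hα
    · exact ((hA x).2 h).2 α hα
  have hAnonneg : ∀ x : X, 0 ≤ A x := by
    intro x
    by_cases h : R x = 0
    · rw [(hA x).1 h]
    · obtain ⟨α, hα⟩ := Finsupp.support_nonempty_iff.mpr h
      obtain ⟨Yx, hYx⟩ := hdec x
      exact le_trans (hYx.1 α hα).le (hsupb x α hα)
  -- tendsto lemma specialized
  have htd : ∀ (x : X) (β : ℝ), 0 < β → A x ≤ β →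
      Tendsto (fun n : ℕ => ((n : ℝ) ^ (-β)) • y n x) atTop (𝓝 (R x β)) := by
    intro x β hβ hxβ
    obtain ⟨Yx, hYx⟩ := hdec x
    exact hYx.tendsto_scaled hβ (fun α hα => le_trans (hsupb x α hα) hxβ)
  -- the Baire-category step
  have key : ∀ (D : ℕ → ℝ), (∀ i, 0 < D i) → (∀ x : X, ∃ i, A x ≤ D i) →
      ∃ i, ∀ x : X, A x ≤ D i := by
    intro D hD hcov
    set S : ℕ → ℕ → Set X :=
      fun i C => {x : X | ∀ n : ℕ, 1 ≤ n → ‖y n x‖ ≤ (C : ℝ) * (n : ℝ) ^ (D i)} with hS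
    have hclosed : ∀ i C, IsClosed (S i C) := by
      intro i C
      have : S i C = ⋂ (n : ℕ), ⋂ (_ : 1 ≤ n),
          {x : X | ‖y n x‖ ≤ (C : ℝ) * (n : ℝ) ^ (D i)} := by
        ext x; simp [hS, Set.mem_iInter]
      rw [this]
      exact isClosed_iInter fun n => isClosed_iInter fun _ =>
        isClosed_le ((y n).continuous.norm) continuous_const
    have hcover : (⋃ p : ℕ × ℕ, S p.1 p.2) = Set.univ := by
      refine Set.eq_univ_of_forall fun x => Set.mem_iUnion.mpr ?_
      obtain ⟨i, hi⟩ := hcov x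
      have ht := htd x (D i) (hD i) hi
      obtain ⟨C₀, hC₀⟩ := ht.norm.bddAbove_range
      simp only [upperBounds, Set.mem_range, Set.mem_setOf_eq] at hC₀
      refine ⟨⟨i, ⌈C₀⌉₊⟩, fun n hn => ?_⟩
      have hn' : (0 : ℝ) < (n : ℝ) := by exact_mod_cast hn
      have h1 : (n : ℝ) ^ (-(D i)) * ‖y n x‖ ≤ C₀ := by
        have := hC₀ ⟨n, rfl⟩
        rwa [norm_smul, Real.norm_of_nonneg (Real.rpow_nonneg hn'.le _)] at this
      have h2 : ‖y n x‖ ≤ C₀ * (n : ℝ) ^ (D i) := by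
        have hpow : (0 : ℝ) < (n : ℝ) ^ (D i) := Real.rpow_pos_of_pos hn' _
        have := mul_le_mul_of_nonneg_left h1 hpow.le
        calc ‖y n x‖ = (n : ℝ) ^ (D i) * ((n : ℝ) ^ (-(D i)) * ‖y n x‖) := by
              rw [← mul_assoc, ← Real.rpow_add hn']
              simp
          _ ≤ (n : ℝ) ^ (D i) * C₀ := this
          _ = C₀ * (n : ℝ) ^ (D i) := by ring
      exact le_trans h2 (mul_le_mul_of_nonneg_right (Nat.le_ceil C₀)
        (Real.rpow_nonneg hn'.le _))
    obtain ⟨⟨i, C⟩, x₁, hx₁⟩ := nonempty_interior_of_iUnion_of_closed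
      (fun p : ℕ × ℕ => hclosed p.1 p.2) hcover
    refine ⟨i, fun x => ?_⟩
    dsimp only at hx₁
    -- `S i C` is convex and symmetric, so `0` is in its interior
    have hconv : Convex ℝ (S i C) := by
      intro u hu v hv a b ha hb hab
      intro n hn
      have hmap : y n (a • u + b • v) = a • y n u + b • y n v := by
        rw [map_add, (y n).map_smul_of_tower, (y n).map_smul_of_tower]
      calc ‖y n (a • u + b • v)‖ ≤ ‖a • y n u‖ + ‖b • y n v‖ := by
            rw [hmap]; exact norm_add_le _ _
        _ = a * ‖y n u‖ + b * ‖y n v‖ := by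
            rw [norm_smul, norm_smul, Real.norm_of_nonneg ha, Real.norm_of_nonneg hb]
        _ ≤ a * ((C : ℝ) * (n : ℝ) ^ (D i)) + b * ((C : ℝ) * (n : ℝ) ^ (D i)) := by
            gcongr
            · exact hu n hn
            · exact hv n hn
        _ = (C : ℝ) * (n : ℝ) ^ (D i) := by rw [← add_mul, hab, one_mul]
    have hsymm : ∀ u ∈ S i C, -u ∈ S i C := by
      intro u hu n hn
      rw [map_neg, norm_neg]
      exact hu n hn
    have hx₁' : x₁ ∈ interior (S i C) := hx₁
    have hnegint : -x₁ ∈ interior (S i C) := by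
      have himg : Neg.neg '' (S i C) = S i C := by
        ext u
        constructor
        · rintro ⟨v, hv, rfl⟩
          exact hsymm v hv
        · intro hu
          exact ⟨-u, hsymm u hu, neg_neg u⟩
      have h1 := (Homeomorph.neg X).image_interior (S i C)
      rw [Homeomorph.coe_neg] at h1
      have h2 : -x₁ ∈ Neg.neg '' interior (S i C) := ⟨x₁, hx₁', rfl⟩
      rw [h1, himg] at h2
      exact h2
    have h0int : (0 : X) ∈ interior (S i C) := by
      have := hconv.interior (x := x₁) (y := -x₁) hx₁' hnegint
        (a := (1:ℝ)/2) (b := (1:ℝ)/2) (by norm_num) (by norm_num) (by norm_num)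
      simpa using this
    have hnhds : S i C ∈ 𝓝 (0 : X) := mem_interior_iff_mem_nhds.mp h0int
    -- absorb `x`
    have habs : ∃ t : ℝ, 0 < t ∧ t • x ∈ S i C := by
      have hc : Tendsto (fun t : ℝ => t • x) (𝓝 0) (𝓝 (0 : X)) := by
        have : Continuous fun t : ℝ => t • x := continuous_id.smul continuous_const
        simpa using this.tendsto 0
      have hev : ∀ᶠ t : ℝ in 𝓝 0, t • x ∈ S i C := hc.eventually_mem hnhds
      obtain ⟨ε, hε, hball⟩ := Metric.eventually_nhds_iff.mp hev
      refine ⟨ε / 2, by linarith, hball ?_⟩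
      simp only [Real.dist_eq, sub_zero]
      rw [abs_of_pos (by linarith : (0:ℝ) < ε/2)]
      linarith
    obtain ⟨t, ht, htx⟩ := habs
    have hxb : ∀ n : ℕ, 1 ≤ n → ‖y n x‖ ≤ ((C : ℝ) / t) * (n : ℝ) ^ (D i) := by
      intro n hn
      have := htx n hn
      rw [(y n).map_smul_of_tower, norm_smul, Real.norm_of_nonneg ht.le] at this
      rw [div_mul_eq_mul_div, le_div_iff₀ ht]
      calc ‖y n x‖ * t = t * ‖y n x‖ := by ring
        _ ≤ (C : ℝ) * (n : ℝ) ^ (D i) := this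
    by_contra hcon
    push_neg at hcon
    have hAx : 0 < A x := lt_trans (hD i) hcon
    have hRx : R x ≠ 0 := by
      intro h0
      rw [(hA x).1 h0] at hAx
      exact lt_irrefl _ hAx
    obtain ⟨Yx, hYx⟩ := hdec x
    exact hYx.not_bdd hAx ((hA x).2 hRx).1 ((hA x).2 hRx).2 hcon hxb
  -- `A` attains its max
  have hmax : ∃ x₀ : X, ∀ x : X, A x ≤ A x₀ := by
    obtain ⟨i₁, hi₁⟩ := key (fun i => (i : ℝ) + 1) (fun i => by positivity)
      (fun x => ⟨⌈A x⌉₊, by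
        show A x ≤ (⌈A x⌉₊ : ℝ) + 1
        linarith [Nat.le_ceil (A x)]⟩)
    have hbdd : BddAbove (Set.range A) := ⟨(i₁ : ℝ) + 1, by
      rintro _ ⟨x, rfl⟩; exact hi₁ x⟩
    have hne : (Set.range A).Nonempty := ⟨A 0, ⟨0, rfl⟩⟩
    by_contra hno
    push_neg at hno
    set s := sSup (Set.range A) with hs
    have hlt : ∀ x : X, A x < s := by
      intro x
      obtain ⟨x', hx'⟩ := hno x
      exact lt_of_lt_of_le hx' (le_csSup hbdd ⟨x', rfl⟩)
    have hspos : 0 < s := lt_of_le_of_lt (hAnonneg 0) (hlt 0)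
    obtain ⟨i, hi⟩ := key (fun n => s - s / ((n : ℝ) + 2))
      (by
        intro n
        have hn2 : (1 : ℝ) < (n : ℝ) + 2 := by
          have := Nat.cast_nonneg (α := ℝ) n
          linarith
        have : s / ((n : ℝ) + 2) < s := div_lt_self hspos hn2
        linarith)
      (by
        intro x
        obtain ⟨m, hm⟩ := exists_nat_ge (s / (s - A x))
        have hpos : 0 < s - A x := by linarith [hlt x]
        rw [div_le_iff₀ hpos] at hm
        refine ⟨m, ?_⟩
        have h2 : s / ((m : ℝ) + 2) ≤ s - A x := by
          rw [div_le_iff₀ (by positivity)]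
          nlinarith
        linarith)
    have : s ≤ s - s / ((i : ℝ) + 2) := csSup_le hne (by rintro _ ⟨x, rfl⟩; exact hi x)
    have : s / ((i : ℝ) + 2) ≤ 0 := by linarith
    have : 0 < s / ((i : ℝ) + 2) := by positivity
    linarith
  obtain ⟨x₀, hx₀⟩ := hmax
  refine ⟨x₀, hx₀, fun hpos => ?_⟩
  have htend : ∀ x : X, Tendsto (fun n : ℕ => ((n : ℝ) ^ (-(A x₀))) • y n x)
      atTop (𝓝 (R x (A x₀))) := fun x => htd x (A x₀) hpos (hx₀ x)
  refine ⟨?_, htend⟩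
  -- build the continuous linear map via Banach–Steinhaus
  have hptw : Tendsto (fun (n : ℕ) (x : X) => (((n : ℝ) ^ (-(A x₀))) • y n) x) atTop
      (𝓝 (fun x => R x (A x₀))) := by
    rw [tendsto_pi_nhds]
    intro x
    simpa [ContinuousLinearMap.smul_apply] using htend x
  let Rc : X →L[𝕜] 𝕜 := (norm_withSeminorms 𝕜 𝕜).continuousLinearMapOfTendsto
    (fun n : ℕ => ((n : ℝ) ^ (-(A x₀))) • y n) hptw
  have hRc : ∀ x : X, Rc x = R x (A x₀) := fun x => rfl
  refine ⟨Rc, ?_, hRc⟩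
  intro hzero
  have hRx₀ : R x₀ ≠ 0 := by
    intro h0
    rw [(hA x₀).1 h0] at hpos
    exact lt_irrefl _ hpos
  have := ((hA x₀).2 hRx₀).1
  apply this
  rw [← hRc x₀, hzero]
  simp
end

section
/- Let $X$ be a Fréchet space and $(y_n)$ a sequence in $X'$ such that for each $x \in X$ the finite part limit of $\langle y_n, x\rangle$ exists. Then the set of exponents $\bigcup_{x\in X}\{\alpha > 0 : R_{\alpha}(x) \ne 0\}$ is finite. -/
open Filter

namespace FPAux

open Topology Set

variable {𝕜 : Type*} [RCLike 𝕜]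

lemma bdd_of_tendsto {z : ℕ → 𝕜} {Y : 𝕜} (hz : Tendsto z atTop (nhds Y)) :
    ∃ M : ℝ, 0 ≤ M ∧ ∀ n, ‖z n‖ ≤ M := by
  obtain ⟨M, hM⟩ := hz.norm.bddAbove_range
  exact ⟨max M 0, le_max_right _ _, fun n => le_trans (hM ⟨n, rfl⟩) (le_max_left _ _)⟩

lemma tendsto_aux_sum (S : Finset ℝ) (c : ℝ → 𝕜) {β : ℝ} (hβ : 0 < β)
    (hle : ∀ α ∈ S, α ≤ β) :
    Tendsto (fun n : ℕ => ((n : ℝ) ^ β)⁻¹ • ∑ α ∈ S, ((n : ℝ) ^ α) • c α) atTop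
      (nhds (if β ∈ S then c β else 0)) := by
  classical
  have key : ∀ α ∈ S, Tendsto (fun n : ℕ => ((n : ℝ) ^ (α - β)) • c α) atTop
      (nhds (if α = β then c α else 0)) := by
    intro α hα
    by_cases hαβ : α = β
    · subst hαβ
      simp only [sub_self, Real.rpow_zero, one_smul, if_pos rfl]
      exact tendsto_const_nhds
    · rw [if_neg hαβ]
      have hneg : 0 < β - α := sub_pos.mpr (lt_of_le_of_ne (hle α hα) hαβ)
      have h0 : Tendsto (fun x : ℝ => x ^ (α - β)) atTop (nhds 0) := by
        have := tendsto_rpow_neg_atTop hneg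
        simpa [neg_sub] using this
      have h1 : Tendsto (fun n : ℕ => ((n : ℝ) ^ (α - β))) atTop (nhds 0) :=
        h0.comp tendsto_natCast_atTop_atTop
      simpa using h1.smul_const (c α)
  have hsum := tendsto_finset_sum S key
  rw [Finset.sum_ite_eq' S β (fun α => c α)] at hsum
  refine hsum.congr' ?_
  filter_upwards [eventually_ge_atTop 1] with n hn
  have hn0 : (0 : ℝ) < (n : ℝ) := by exact_mod_cast Nat.lt_of_lt_of_le Nat.zero_lt_one hn
  rw [Finset.smul_sum]
  refine Finset.sum_congr rfl fun α hα => ?_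
  rw [smul_smul]
  congr 1
  rw [Real.rpow_sub hn0, div_eq_mul_inv, mul_comm]

variable {S : Finset ℝ} {c : ℝ → 𝕜} {z : ℕ → 𝕜} {Y : 𝕜} {w : ℕ → 𝕜}

lemma grow_of_le (hz : Tendsto z atTop (nhds Y))
    (hw : ∀ n, w n = (∑ α ∈ S, ((n : ℝ) ^ α) • c α) + z n)
    {q : ℝ} (hq : 0 ≤ q) (hle : ∀ α ∈ S, α ≤ q) :
    ∃ C : ℝ, 0 ≤ C ∧ ∀ n : ℕ, 1 ≤ n → ‖w n‖ ≤ C * (n : ℝ) ^ q := by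
  obtain ⟨M, hM0, hM⟩ := bdd_of_tendsto hz
  have hCpos : (0:ℝ) ≤ (∑ α ∈ S, ‖c α‖) + M := by positivity
  refine ⟨(∑ α ∈ S, ‖c α‖) + M, hCpos, fun n hn => ?_⟩
  have hn1 : (1 : ℝ) ≤ (n : ℝ) := by exact_mod_cast hn
  have hnq1 : (1 : ℝ) ≤ (n : ℝ) ^ q := by
    calc (1:ℝ) = (n:ℝ) ^ (0:ℝ) := (Real.rpow_zero _).symm
    _ ≤ (n:ℝ) ^ q := Real.rpow_le_rpow_of_exponent_le hn1 hq
  have hterm : ∀ α ∈ S, ‖((n : ℝ) ^ α) • c α‖ ≤ ‖c α‖ * (n:ℝ) ^ q := by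
    intro α hα
    rw [norm_smul, Real.norm_eq_abs,
      abs_of_nonneg (Real.rpow_nonneg (by positivity) _), mul_comm]
    exact mul_le_mul_of_nonneg_left
      (Real.rpow_le_rpow_of_exponent_le hn1 (hle α hα)) (norm_nonneg _)
  calc ‖w n‖ ≤ ‖∑ α ∈ S, ((n : ℝ) ^ α) • c α‖ + ‖z n‖ := by
        rw [hw n]; exact norm_add_le _ _
    _ ≤ (∑ α ∈ S, ‖c α‖ * (n:ℝ)^q) + M * (n:ℝ)^q :=
        add_le_add (le_trans (norm_sum_le _ _) (Finset.sum_le_sum hterm))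
          (le_trans (hM n) (le_mul_of_one_le_right hM0 hnq1))
    _ = ((∑ α ∈ S, ‖c α‖) + M) * (n:ℝ)^q := by rw [add_mul, Finset.sum_mul]

lemma tendsto_top (hz : Tendsto z atTop (nhds Y))
    (hw : ∀ n, w n = (∑ α ∈ S, ((n : ℝ) ^ α) • c α) + z n)
    {β : ℝ} (hβ : 0 < β) (hle : ∀ α ∈ S, α ≤ β) :
    Tendsto (fun n : ℕ => ((n : ℝ) ^ β)⁻¹ • w n) atTop
      (nhds (if β ∈ S then c β else 0)) := by
  classical
  have h1 := tendsto_aux_sum S c hβ hle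
  obtain ⟨M, hM0, hM⟩ := bdd_of_tendsto hz
  have h2 : Tendsto (fun n : ℕ => ((n : ℝ) ^ β)⁻¹ • z n) atTop (nhds 0) := by
    have hb : Tendsto (fun n : ℕ => (n:ℝ) ^ β) atTop atTop :=
      (tendsto_rpow_atTop hβ).comp tendsto_natCast_atTop_atTop
    have hinv : Tendsto (fun n : ℕ => ((n:ℝ) ^ β)⁻¹) atTop (nhds 0) :=
      hb.inv_tendsto_atTop
    refine squeeze_zero_norm' (a := fun n : ℕ => M * ((n:ℝ) ^ β)⁻¹) ?_
      (by simpa using hinv.const_mul M)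
    refine Eventually.of_forall fun n => ?_
    rw [norm_smul, Real.norm_eq_abs,
      abs_of_nonneg (inv_nonneg.mpr (Real.rpow_nonneg (Nat.cast_nonneg n) β)), mul_comm]
    exact mul_le_mul_of_nonneg_right (hM n)
      (inv_nonneg.mpr (Real.rpow_nonneg (Nat.cast_nonneg n) β))
  have h3 := h1.add h2
  rw [add_zero] at h3
  refine h3.congr fun n => ?_
  rw [hw n, smul_add]

lemma le_of_grow (hz : Tendsto z atTop (nhds Y))
    (hw : ∀ n, w n = (∑ α ∈ S, ((n : ℝ) ^ α) • c α) + z n)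
    (hpos : ∀ α ∈ S, 0 < α) (hSc : ∀ α ∈ S, c α ≠ 0)
    {q C : ℝ} (hb : ∀ n : ℕ, 1 ≤ n → ‖w n‖ ≤ C * (n : ℝ) ^ q) :
    ∀ α ∈ S, α ≤ q := by
  classical
  intro α hα
  have hS : S.Nonempty := ⟨α, hα⟩
  have hmem := S.max'_mem hS
  have hαm : α ≤ S.max' hS := S.le_max' α hα
  suffices hm : S.max' hS ≤ q by linarith
  by_contra hgt
  push_neg at hgt
  set m := S.max' hS with hmdef
  have hT := tendsto_top hz hw (hpos m hmem) (fun a ha => S.le_max' a ha)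
  rw [if_pos hmem] at hT
  have h0 : Tendsto (fun n : ℕ => ((n : ℝ) ^ m)⁻¹ • w n) atTop (nhds 0) := by
    refine squeeze_zero_norm' (a := fun n : ℕ => C * ((n:ℝ) ^ (q - m))) ?_ ?_
    · filter_upwards [eventually_ge_atTop 1] with n hn
      have hn0 : (0:ℝ) < (n:ℝ) := by exact_mod_cast Nat.lt_of_lt_of_le Nat.zero_lt_one hn
      rw [norm_smul, Real.norm_eq_abs,
        abs_of_nonneg (inv_nonneg.mpr (Real.rpow_nonneg hn0.le m))]
      calc ((n:ℝ)^m)⁻¹ * ‖w n‖ ≤ ((n:ℝ)^m)⁻¹ * (C * (n:ℝ)^q) :=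
            mul_le_mul_of_nonneg_left (hb n hn) (inv_nonneg.mpr (Real.rpow_nonneg hn0.le m))
        _ = C * (n:ℝ)^(q - m) := by
            rw [Real.rpow_sub hn0]; ring
    · have hneg : Tendsto (fun x : ℝ => x ^ (q - m)) atTop (nhds 0) := by
        have := tendsto_rpow_neg_atTop (y := m - q) (by linarith)
        simpa [neg_sub] using this
      simpa using (hneg.comp tendsto_natCast_atTop_atTop).const_mul C
  exact hSc m hmem (tendsto_nhds_unique hT h0)

lemma sum_sdiff_vanish {M : Type*} [AddCommGroup M] (s t : Finset ℝ) (f : ℝ → M)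
    (hf : ∀ a ∈ t, a ∉ s → f a = 0) :
    (∑ a ∈ s, f a) - (∑ a ∈ t, f a) = ∑ a ∈ s \ t, f a := by
  classical
  have h1 : ∑ a ∈ t, f a = ∑ a ∈ s ∩ t, f a := by
    rw [Finset.inter_comm]
    refine (Finset.sum_subset Finset.inter_subset_left ?_).symm
    intro a ha h2
    exact hf a ha fun hs => h2 (Finset.mem_inter.mpr ⟨ha, hs⟩)
  rw [h1, ← Finset.sum_inter_add_sum_sdiff s t f]
  abel

section Space


variable {𝕜 : Type*} [RCLike 𝕜]

lemma baireX (X : Type*) [AddCommGroup X] [UniformSpace X] [IsUniformAddGroup X]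
    [CompleteSpace X] [TopologicalSpace.MetrizableSpace X] : BaireSpace X := by
  haveI : (uniformity X).IsCountablyGenerated :=
    IsUniformAddGroup.uniformity_countably_generated
  letI := UniformSpace.pseudoMetricSpace X
  infer_instance

variable {X : Type*} [AddCommGroup X] [Module 𝕜 X] [UniformSpace X] [IsUniformAddGroup X]
  [ContinuousSMul 𝕜 X]

lemma exists_smul_mem (x : X) {V : Set X} (hV : V ∈ nhds (0 : X)) :
    ∃ c : 𝕜, c ≠ 0 ∧ c • x ∈ V := by
  have hcont : Continuous fun c : 𝕜 => c • x := continuous_id.smul continuous_const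
  have h0 : Tendsto (fun c : 𝕜 => c • x) (nhds 0) (nhds 0) := by
    simpa using hcont.tendsto 0
  have hpre : (fun c : 𝕜 => c • x) ⁻¹' V ∈ nhds (0:𝕜) := mem_map.mp (h0 hV)
  rw [Metric.mem_nhds_iff] at hpre
  obtain ⟨ε, hε, hball⟩ := hpre
  refine ⟨(RCLike.ofReal (ε/2) : 𝕜), ?_, ?_⟩
  · simp only [ne_eq, RCLike.ofReal_eq_zero]
    positivity
  · apply hball
    simp only [Metric.mem_ball, dist_zero_right, RCLike.norm_ofReal, abs_of_pos (by positivity : (0:ℝ) < ε/2)]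
    linarith

lemma continuous_of_locbdd (T : X → 𝕜) (hadd : ∀ a b, T (a+b) = T a + T b)
    (hsmul : ∀ (k : 𝕜) (a : X), T (k • a) = k * T a)
    {V : Set X} (hV : V ∈ nhds (0:X)) {K : ℝ} (hK : ∀ v ∈ V, ‖T v‖ ≤ K) :
    Continuous T := by
  have hT0 : T 0 = 0 := by
    have h := hadd 0 0
    rw [add_zero] at h
    have h2 : T 0 + 0 = T 0 + T 0 := by rw [add_zero]; exact h
    exact (add_left_cancel h2).symm
  have hK0 : 0 ≤ K := by simpa [hT0] using hK 0 (mem_of_mem_nhds hV)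
  have hct0 : Tendsto T (nhds 0) (nhds 0) := by
    rw [Metric.tendsto_nhds]
    intro ε hε
    set c : 𝕜 := (RCLike.ofReal (ε / (2*(K+1))) : 𝕜) with hc
    have hcnorm : ‖c‖ = ε / (2*(K+1)) := by
      rw [hc, RCLike.norm_ofReal, abs_of_pos (by positivity)]
    have hc0 : c ≠ 0 := by
      intro h0
      have : ‖c‖ ≠ 0 := by rw [hcnorm]; positivity
      exact this (by rw [h0, norm_zero])
    have hWc : Continuous fun v : X => c⁻¹ • v := continuous_const.smul continuous_id
    have hWt : Tendsto (fun v : X => c⁻¹ • v) (nhds 0) (nhds 0) := by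
      simpa using hWc.tendsto 0
    have hW : (fun v : X => c⁻¹ • v) ⁻¹' V ∈ nhds (0:X) := mem_map.mp (hWt hV)
    filter_upwards [hW] with v hv
    have hTx : T v = c * T (c⁻¹ • v) := by
      rw [← hsmul, smul_smul, mul_inv_cancel₀ hc0, one_smul]
    rw [dist_zero_right, hTx, norm_mul]
    calc ‖c‖ * ‖T (c⁻¹ • v)‖ ≤ ‖c‖ * K :=
          mul_le_mul_of_nonneg_left (hK _ hv) (norm_nonneg c)
      _ = ε / (2*(K+1)) * K := by rw [hcnorm]
      _ < ε := by
          rw [div_mul_eq_mul_div, div_lt_iff₀ (by positivity)]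
          nlinarith
  rw [continuous_iff_continuousAt]
  intro x₀
  have h1 : Tendsto (fun x : X => x - x₀) (nhds x₀) (nhds 0) := by
    have this : Tendsto (fun x : X => x - x₀) (nhds x₀) (nhds (x₀ - x₀)) := ((continuous_id.sub continuous_const).tendsto x₀ : Tendsto (fun x : X => x - x₀) (nhds x₀) (nhds (x₀ - x₀)))
    rw [sub_self] at this; exact this
  have h2 : Tendsto (fun x => T (x - x₀) + T x₀) (nhds x₀) (nhds (0 + T x₀)) :=
    (hct0.comp h1).add tendsto_const_nhds
  rw [zero_add] at h2
  unfold ContinuousAt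
  refine h2.congr fun x => ?_
  rw [← hadd, sub_add_cancel]


end Space

section Key

variable {𝕜 X : Type*} [RCLike 𝕜] [AddCommGroup X]
    [Module 𝕜 X] [UniformSpace X] [IsUniformAddGroup X]
    [ContinuousSMul 𝕜 X] [CompleteSpace X] [TopologicalSpace.MetrizableSpace X]

lemma key (y : ℕ → X →L[𝕜] 𝕜) (R : X → ℝ →₀ 𝕜) (z : X → ℕ → 𝕜)
    (h : ∀ x : X, ∃ Yx : 𝕜, FPDecomp (fun n => y n x) (R x) (z x) Yx)
    (G : Finset ℝ)
    (hGc : ∀ γ ∈ G, Continuous fun x : X => R x γ)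
    (hGl : ∀ γ ∈ G, IsLinearMap 𝕜 fun x : X => R x γ)
    (hne : ∃ α, (∃ x : X, R x α ≠ 0) ∧ α ∉ G) :
    ∃ β, (∃ x : X, R x β ≠ 0) ∧ β ∉ G ∧ (Continuous fun x : X => R x β) ∧
      IsLinearMap 𝕜 fun x : X => R x β := by
  classical
  haveI : BaireSpace X := baireX X
  haveI : Nonempty X := ⟨0⟩
  have hP1 : ∀ x : X, ∀ α ∈ (R x).support, (0:ℝ) < α := fun x => (h x).choose_spec.1
  have hP2 : ∀ (x : X) (n : ℕ),
      y n x = (∑ α ∈ (R x).support, ((n : ℝ) ^ α) • R x α) + z x n :=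
    fun x => (h x).choose_spec.2.1
  have hP3 : ∀ x : X, Tendsto (z x) atTop (nhds (h x).choose) :=
    fun x => (h x).choose_spec.2.2
  set w : ℕ → X → 𝕜 := fun n x => y n x - ∑ γ ∈ G, ((n : ℝ) ^ γ) • R x γ with hwdef
  have hwdecomp : ∀ x : X, ∀ n : ℕ,
      w n x = (∑ α ∈ (R x).support \ G, ((n : ℝ) ^ α) • R x α) + z x n := by
    intro x n
    have e1 : w n x = ((∑ α ∈ (R x).support, ((n : ℝ) ^ α) • R x α)
        - ∑ γ ∈ G, ((n : ℝ) ^ γ) • R x γ) + z x n := by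
      simp only [hwdef]
      rw [hP2 x n]
      abel
    rw [e1, sum_sdiff_vanish _ _ _
      (fun a _ hns => by rw [Finsupp.notMem_support_iff.mp hns, smul_zero])]
  have hcont_w : ∀ n : ℕ, Continuous fun x : X => w n x := by
    intro n
    simp only [hwdef]
    exact (y n).continuous.sub
      (continuous_finset_sum _ fun γ hγ => (hGc γ hγ).const_smul _)
  have hadd_w : ∀ (n : ℕ) (a b : X), w n (a + b) = w n a + w n b := by
    intro n a b
    simp only [hwdef, map_add]
    rw [show (∑ γ ∈ G, ((n:ℝ)^γ) • R (a+b) γ)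
        = ∑ γ ∈ G, (((n:ℝ)^γ) • R a γ + ((n:ℝ)^γ) • R b γ) from
      Finset.sum_congr rfl fun γ hγ => by rw [(hGl γ hγ).map_add, smul_add],
      Finset.sum_add_distrib]
    abel
  have hsmul_w : ∀ (n : ℕ) (k : 𝕜) (a : X), w n (k • a) = k • w n a := by
    intro n k a
    simp only [hwdef, ContinuousLinearMap.map_smul]
    rw [show (∑ γ ∈ G, ((n:ℝ)^γ) • R (k • a) γ)
        = ∑ γ ∈ G, k • (((n:ℝ)^γ) • R a γ) from
      Finset.sum_congr rfl fun γ hγ => by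
        rw [(hGl γ hγ).map_smul, smul_comm],
      ← Finset.smul_sum, smul_sub]
  set F : ℝ → ℝ → Set X := fun q C => {x : X | ∀ n : ℕ, 1 ≤ n → ‖w n x‖ ≤ C * (n:ℝ)^q}
    with hFdef
  have hFclosed : ∀ q C : ℝ, IsClosed (F q C) := by
    intro q C
    have he : F q C = ⋂ (n : ℕ), ⋂ (_ : 1 ≤ n), {x : X | ‖w n x‖ ≤ C * (n:ℝ)^q} := by
      ext x
      simp [hFdef, Set.mem_iInter]
    rw [he]
    exact isClosed_iInter fun n => isClosed_iInter fun _ =>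
      isClosed_le (hcont_w n).norm continuous_const
  have hmemF : ∀ x : X, ∃ k : ℕ, x ∈ F (k:ℝ) (k:ℝ) := by
    intro x
    obtain ⟨b, hb⟩ : ∃ b : ℝ, ∀ a ∈ (R x).support \ G, a ≤ b := by
      rcases Finset.eq_empty_or_nonempty ((R x).support \ G) with he | hne'
      · exact ⟨0, by simp [he]⟩
      · exact ⟨((R x).support \ G).max' hne', fun a ha => Finset.le_max' _ a ha⟩
    obtain ⟨C, hC0, hC⟩ := grow_of_le (hP3 x) (hwdecomp x) (le_max_right b 0)
        (fun α hα => le_trans (hb α hα) (le_max_left _ _))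
    obtain ⟨k, hk⟩ := exists_nat_ge (max (max b 0) C)
    refine ⟨k, fun n hn => ?_⟩
    have hn1 : (1:ℝ) ≤ (n:ℝ) := by exact_mod_cast hn
    calc ‖w n x‖ ≤ C * (n:ℝ) ^ (max b 0) := hC n hn
      _ ≤ (k:ℝ) * (n:ℝ) ^ (k:ℝ) := by
          have h1 : (n:ℝ) ^ (max b 0) ≤ (n:ℝ)^(k:ℝ) :=
            Real.rpow_le_rpow_of_exponent_le hn1
              (le_trans (le_max_left _ _) hk)
          have h2 : C ≤ (k:ℝ) := le_trans (le_max_right _ _) hk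
          exact mul_le_mul h2 h1 (Real.rpow_nonneg (by positivity) _) (Nat.cast_nonneg k)
  have hbound : ∀ q C : ℝ, (interior (F q C)).Nonempty →
      ∀ x : X, ∃ C' : ℝ, ∀ n : ℕ, 1 ≤ n → ‖w n x‖ ≤ C' * (n:ℝ)^q := by
    rintro q C ⟨x₀, hx₀⟩
    have hx₀F : x₀ ∈ F q C := interior_subset hx₀
    have hVn : {v : X | x₀ + v ∈ interior (F q C)} ∈ nhds (0:X) := by
      have hco : Continuous fun v : X => x₀ + v := continuous_const.add continuous_id
      have hm := (isOpen_interior.preimage hco).mem_nhds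
        (show x₀ + 0 ∈ interior (F q C) by simpa using hx₀)
      simpa [Set.preimage] using hm
    intro x
    obtain ⟨c, hc0, hcV⟩ := exists_smul_mem (𝕜 := 𝕜) x hVn
    have hcF : x₀ + c • x ∈ F q C := interior_subset hcV
    refine ⟨(2*C) / ‖c‖, fun n hn => ?_⟩
    have h1 : ‖w n (x₀ + c • x)‖ ≤ C * (n:ℝ)^q := hcF n hn
    have h2 : ‖w n x₀‖ ≤ C * (n:ℝ)^q := hx₀F n hn
    have h3 : c • w n x = w n (x₀ + c • x) - w n x₀ := by
      rw [hadd_w, hsmul_w]; abel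
    have h4 : ‖c • w n x‖ ≤ 2*C*(n:ℝ)^q := by
      rw [h3]
      calc ‖w n (x₀ + c • x) - w n x₀‖ ≤ ‖w n (x₀ + c • x)‖ + ‖w n x₀‖ :=
            norm_sub_le _ _
        _ ≤ 2*C*(n:ℝ)^q := by linarith
    rw [norm_smul] at h4
    have hcpos : 0 < ‖c‖ := norm_pos_iff.mpr hc0
    calc ‖w n x‖ = (‖c‖ * ‖w n x‖)/‖c‖ := by field_simp
      _ ≤ (2*C*(n:ℝ)^q)/‖c‖ := by gcongr
      _ = 2*C/‖c‖ * (n:ℝ)^q := by ring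
  obtain ⟨k₀, hk₀⟩ := nonempty_interior_of_iUnion_of_closed
      (fun k : ℕ => hFclosed (k:ℝ) (k:ℝ))
      (Set.eq_univ_iff_forall.mpr fun x => Set.mem_iUnion.mpr (hmemF x))
  have hEub : ∀ α : ℝ, (∃ x : X, R x α ≠ 0) → α ∉ G → α ≤ (k₀:ℝ) := by
    rintro α ⟨x, hxα⟩ hαG
    obtain ⟨C', hC'⟩ := hbound _ _ hk₀ x
    refine le_of_grow (hP3 x) (hwdecomp x)
        (fun a ha => hP1 x a (Finset.mem_sdiff.mp ha).1)
        (fun a ha => Finsupp.mem_support_iff.mp (Finset.mem_sdiff.mp ha).1) hC' α ?_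
    exact Finset.mem_sdiff.mpr ⟨Finsupp.mem_support_iff.mpr hxα, hαG⟩
  set EG : Set ℝ := {α | (∃ x : X, R x α ≠ 0) ∧ α ∉ G} with hEGdef
  have hEGne : EG.Nonempty := hne
  have hEGbdd : BddAbove EG := ⟨(k₀:ℝ), fun α hα => hEub α hα.1 hα.2⟩
  set β := sSup EG with hβdef
  obtain ⟨α₀, hα₀⟩ := hEGne
  have hα₀pos : (0:ℝ) < α₀ := by
    obtain ⟨x, hx⟩ := hα₀.1
    exact hP1 x α₀ (Finsupp.mem_support_iff.mpr hx)
  have hβpos : 0 < β := lt_of_lt_of_le hα₀pos (le_csSup hEGbdd hα₀)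
  have hβub : ∀ x : X, ∀ a ∈ (R x).support \ G, a ≤ β := by
    intro x a ha
    rcases Finset.mem_sdiff.mp ha with ⟨h1, h2⟩
    exact le_csSup hEGbdd ⟨⟨x, Finsupp.mem_support_iff.mp h1⟩, h2⟩
  set qs : ℕ → ℝ := fun j => β - β * (1/((j:ℝ)+1)) with hqdef
  have hq0 : ∀ j : ℕ, 0 ≤ qs j := by
    intro j
    have h1 : 1/((j:ℝ)+1) ≤ 1 := by
      rw [div_le_one (by positivity)]
      have hj : (0:ℝ) ≤ (j:ℝ) := Nat.cast_nonneg j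
      linarith
    simp only [hqdef]
    nlinarith
  have hqlt : ∀ j : ℕ, qs j < β := by
    intro j
    have h1 : 0 < 1/((j:ℝ)+1) := by positivity
    simp only [hqdef]
    nlinarith
  have hqtend : Tendsto qs atTop (nhds β) := by
    have h1 : Tendsto (fun j : ℕ => 1/((j:ℝ)+1)) atTop (nhds 0) :=
      tendsto_one_div_add_atTop_nhds_zero_nat
    have h2 : Tendsto (fun j : ℕ => β - β * (1/((j:ℝ)+1))) atTop (nhds (β - β * 0)) :=
      tendsto_const_nhds.sub (h1.const_mul β)
    rw [hqdef]
    simpa using h2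
  have hxstar : ∃ x : X, ∀ j k : ℕ, x ∉ F (qs j) (k:ℝ) := by
    by_contra hcon
    push_neg at hcon
    have hU2 : ⋃ p : ℕ × ℕ, F (qs p.1) ((p.2 : ℕ):ℝ) = Set.univ := by
      refine Set.eq_univ_iff_forall.mpr fun x => Set.mem_iUnion.mpr ?_
      obtain ⟨j, k, hjk⟩ := hcon x
      exact ⟨(j, k), hjk⟩
    obtain ⟨p, hp⟩ := nonempty_interior_of_iUnion_of_closed
        (fun p : ℕ × ℕ => hFclosed (qs p.1) ((p.2 : ℕ):ℝ)) hU2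
    have hb2 := hbound _ _ hp
    have hle2 : β ≤ qs p.1 := by
      rw [hβdef]
      refine csSup_le ⟨α₀, hα₀⟩ fun α hα => ?_
      obtain ⟨⟨x, hx⟩, hG2⟩ := hα
      obtain ⟨C', hC'⟩ := hb2 x
      exact le_of_grow (hP3 x) (hwdecomp x)
        (fun a ha => hP1 x a (Finset.mem_sdiff.mp ha).1)
        (fun a ha => Finsupp.mem_support_iff.mp (Finset.mem_sdiff.mp ha).1) hC' α
        (Finset.mem_sdiff.mpr ⟨Finsupp.mem_support_iff.mpr hx, hG2⟩)
    exact absurd hle2 (not_le.mpr (hqlt p.1))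
  obtain ⟨xs, hxs⟩ := hxstar
  have hxj : ∀ j : ℕ, ∃ a ∈ (R xs).support \ G, qs j < a := by
    intro j
    by_contra hno
    push_neg at hno
    obtain ⟨C, hC0, hC⟩ := grow_of_le (hP3 xs) (hwdecomp xs) (hq0 j) hno
    obtain ⟨k, hk⟩ := exists_nat_ge C
    refine hxs j k fun n hn => le_trans (hC n hn) ?_
    exact mul_le_mul_of_nonneg_right hk (Real.rpow_nonneg (Nat.cast_nonneg n) _)
  have hSne : ((R xs).support \ G).Nonempty := by
    obtain ⟨a, ha, _⟩ := hxj 0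
    exact ⟨a, ha⟩
  have hmβ : ((R xs).support \ G).max' hSne ≤ β := hβub xs _ (Finset.max'_mem _ _)
  have hβm : β ≤ ((R xs).support \ G).max' hSne := by
    refine le_of_tendsto hqtend (Eventually.of_forall fun j => ?_)
    obtain ⟨a, ha, hqa⟩ := hxj j
    exact le_trans hqa.le (Finset.le_max' _ a ha)
  have hmemβ : β ∈ (R xs).support \ G := by
    have heq : ((R xs).support \ G).max' hSne = β := le_antisymm hmβ hβm
    rw [← heq]
    exact Finset.max'_mem _ _
  have hβG : β ∉ G := (Finset.mem_sdiff.mp hmemβ).2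
  have hβE : ∃ x : X, R x β ≠ 0 :=
    ⟨xs, Finsupp.mem_support_iff.mp (Finset.mem_sdiff.mp hmemβ).1⟩
  have ht : ∀ x : X, Tendsto (fun n : ℕ => ((n:ℝ)^β)⁻¹ • w n x) atTop
      (nhds (R x β)) := by
    intro x
    have h1 := tendsto_top (hP3 x) (hwdecomp x) hβpos (hβub x)
    by_cases hmem : β ∈ (R x).support \ G
    · rwa [if_pos hmem] at h1
    · rw [if_neg hmem] at h1
      have h2 : R x β = 0 := by
        by_contra hne0
        exact hmem (Finset.mem_sdiff.mpr ⟨Finsupp.mem_support_iff.mpr hne0, hβG⟩)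
      rwa [h2]
  have hTadd : ∀ a b : X, R (a+b) β = R a β + R b β := by
    intro a b
    refine tendsto_nhds_unique (ht (a+b)) ?_
    refine ((ht a).add (ht b)).congr fun n => ?_
    rw [← smul_add, ← hadd_w]
  have hTsmul : ∀ (k : 𝕜) (a : X), R (k • a) β = k * R a β := by
    intro k a
    refine tendsto_nhds_unique (ht (k • a)) ?_
    have h1 := (ht a).const_smul k
    rw [smul_eq_mul] at h1
    refine h1.congr fun n => ?_
    rw [hsmul_w]
    exact smul_comm k _ _
  have hcov2 : ⋃ k : ℕ, F β (k:ℝ) = Set.univ := by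
    refine Set.eq_univ_iff_forall.mpr fun x => Set.mem_iUnion.mpr ?_
    obtain ⟨C, hC0, hC⟩ := grow_of_le (hP3 x) (hwdecomp x) hβpos.le (hβub x)
    obtain ⟨k, hk⟩ := exists_nat_ge C
    exact ⟨k, fun n hn => le_trans (hC n hn)
      (mul_le_mul_of_nonneg_right hk (Real.rpow_nonneg (Nat.cast_nonneg n) _))⟩
  obtain ⟨k₁, hk₁⟩ := nonempty_interior_of_iUnion_of_closed
      (fun k : ℕ => hFclosed β (k:ℝ)) hcov2
  obtain ⟨x₁, hx₁⟩ := hk₁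
  have hVn : {v : X | x₁ + v ∈ interior (F β (k₁:ℝ))} ∈ nhds (0:X) := by
    have hco : Continuous fun v : X => x₁ + v := continuous_const.add continuous_id
    have hm := (isOpen_interior.preimage hco).mem_nhds
      (show x₁ + 0 ∈ interior (F β (k₁:ℝ)) by simpa using hx₁)
    simpa [Set.preimage] using hm
  have hTV : ∀ v ∈ {v : X | x₁ + v ∈ interior (F β (k₁:ℝ))},
      ‖R v β‖ ≤ 2*(k₁:ℝ) := by
    intro v hv
    have hvF : x₁ + v ∈ F β (k₁:ℝ) := interior_subset hv
    have hx₁F : x₁ ∈ F β (k₁:ℝ) := interior_subset hx₁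
    refine le_of_tendsto (ht v).norm ?_
    filter_upwards [eventually_ge_atTop 1] with n hn
    have hn0 : (0:ℝ) < (n:ℝ) := by
      exact_mod_cast Nat.lt_of_lt_of_le Nat.zero_lt_one hn
    have hnb : (0:ℝ) < (n:ℝ)^β := Real.rpow_pos_of_pos hn0 β
    have h3 : ‖w n v‖ ≤ 2*(k₁:ℝ)*(n:ℝ)^β := by
      have he : w n v = w n (x₁+v) - w n x₁ := by rw [hadd_w]; abel
      rw [he]
      calc ‖w n (x₁+v) - w n x₁‖ ≤ ‖w n (x₁+v)‖ + ‖w n x₁‖ := norm_sub_le _ _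
        _ ≤ 2*(k₁:ℝ)*(n:ℝ)^β := by linarith [hvF n hn, hx₁F n hn]
    rw [norm_smul, Real.norm_eq_abs, abs_of_nonneg (inv_nonneg.mpr hnb.le)]
    calc ((n:ℝ)^β)⁻¹ * ‖w n v‖ ≤ ((n:ℝ)^β)⁻¹ * (2*(k₁:ℝ)*(n:ℝ)^β) :=
          mul_le_mul_of_nonneg_left h3 (inv_nonneg.mpr hnb.le)
      _ = 2*(k₁:ℝ) := by field_simp
  have hcontT : Continuous fun x : X => R x β :=
    continuous_of_locbdd (fun x => R x β) hTadd hTsmul hVn hTV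
  exact ⟨β, hβE, hβG, hcontT, ⟨hTadd, fun k a => by
    rw [smul_eq_mul]; exact hTsmul k a⟩⟩

end Key

end FPAux

open FPAux in
/-- In a Fréchet space, if the finite part limit of `⟨yₙ, x⟩` exists for every `x`, then the
total set of exponents `⋃ₓ {α > 0 : R_α(x) ≠ 0}` appearing in the infinite parts is finite. -/
theorem exponent_set_finite {𝕜 X : Type*} [RCLike 𝕜] [AddCommGroup X]
    [Module 𝕜 X] [Module ℝ X] [IsScalarTower ℝ 𝕜 X] [UniformSpace X] [IsUniformAddGroup X]
    [ContinuousSMul 𝕜 X] [CompleteSpace X] [TopologicalSpace.MetrizableSpace X]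
    [LocallyConvexSpace ℝ X]
    (y : ℕ → X →L[𝕜] 𝕜) (R : X → ℝ →₀ 𝕜) (z : X → ℕ → 𝕜)
    (h : ∀ x : X, ∃ Yx : 𝕜, FPDecomp (fun n => y n x) (R x) (z x) Yx) :
    {α : ℝ | ∃ x : X, R x α ≠ 0}.Finite := by
  classical
  by_contra hinf
  have hinf' : {α : ℝ | ∃ x : X, R x α ≠ 0}.Infinite := hinf
  haveI : BaireSpace X := FPAux.baireX X
  haveI : Nonempty X := ⟨0⟩
  set S : Set ℝ := {β | (∃ x : X, R x β ≠ 0) ∧ (Continuous fun x : X => R x β) ∧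
    IsLinearMap 𝕜 fun x : X => R x β} with hSdef
  have hext : ∀ Gf : Finset ℝ, ↑Gf ⊆ S → ∃ β ∈ S, β ∉ Gf := by
    intro Gf hGf
    obtain ⟨α, hαE, hαG⟩ := hinf'.exists_notMem_finset Gf
    obtain ⟨β, h1, h2, h3, h4⟩ := FPAux.key y R z h Gf
      (fun γ hγ => (hGf hγ).2.1) (fun γ hγ => (hGf hγ).2.2) ⟨α, hαE, hαG⟩
    exact ⟨β, ⟨h1, h3, h4⟩, h2⟩
  have hSinf : S.Infinite := by
    by_contra hni
    rw [Set.not_infinite] at hni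
    obtain ⟨β, hβS, hβG⟩ := hext hni.toFinset
      (fun a ha => (Set.Finite.mem_toFinset hni).mp ha)
    exact hβG ((Set.Finite.mem_toFinset hni).mpr hβS)
  set e := hSinf.natEmbedding with hedef
  have hmem : ∀ i : ℕ, ((e i : ℝ) ∈ S) := fun i => (e i).2
  have hUo : ∀ i : ℕ, IsOpen {x : X | R x ((e i : ℝ)) ≠ 0} := by
    intro i
    have hc : Continuous fun x : X => R x ((e i : ℝ)) := (hmem i).2.1
    have heq : {x : X | R x ((e i : ℝ)) ≠ 0}
        = (fun x : X => R x ((e i : ℝ))) ⁻¹' ({0}ᶜ) := rfl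
    rw [heq]
    exact isOpen_compl_singleton.preimage hc
  have hUd : ∀ i : ℕ, Dense {x : X | R x ((e i : ℝ)) ≠ 0} := by
    intro i
    obtain ⟨⟨u, hu⟩, hcont, hlin⟩ := hmem i
    rw [dense_iff_inter_open]
    rintro O hO ⟨x0, hx0⟩
    by_cases hx : R x0 ((e i : ℝ)) ≠ 0
    · exact ⟨x0, hx0, hx⟩
    push_neg at hx
    have hφ : Continuous fun t : 𝕜 => x0 + t • u :=
      continuous_const.add (continuous_id.smul continuous_const)
    have hφ0 : Filter.Tendsto (fun t : 𝕜 => x0 + t • u) (nhds 0) (nhds x0) := by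
      simpa using hφ.tendsto 0
    have hpre : (fun t : 𝕜 => x0 + t • u) ⁻¹' O ∈ nhds (0:𝕜) :=
      Filter.mem_map.mp (hφ0 (hO.mem_nhds hx0))
    rw [Metric.mem_nhds_iff] at hpre
    obtain ⟨ε, hε, hball⟩ := hpre
    set t : 𝕜 := (RCLike.ofReal (ε/2) : 𝕜) with htdef
    have ht0 : t ≠ 0 := by
      simp only [htdef, ne_eq, RCLike.ofReal_eq_zero]
      positivity
    have htO : x0 + t • u ∈ O := by
      apply hball
      simp only [Metric.mem_ball, dist_zero_right, htdef, RCLike.norm_ofReal]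
      rw [abs_of_pos (by positivity)]
      linarith
    refine ⟨x0 + t • u, htO, ?_⟩
    have hval : R (x0 + t • u) ((e i : ℝ))
        = R x0 ((e i : ℝ)) + t * R u ((e i : ℝ)) := by
      have h1 := hlin.map_add x0 (t • u)
      have h2 := hlin.map_smul t u
      rw [smul_eq_mul] at h2
      rw [h1, h2]
    show R (x0 + t • u) ((e i : ℝ)) ≠ 0
    rw [hval, hx, zero_add]
    exact mul_ne_zero ht0 hu
  have hD := dense_iInter_of_isOpen hUo hUd
  obtain ⟨xs, hxs⟩ := hD.nonempty
  rw [Set.mem_iInter] at hxs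
  have hrange : Set.range (fun i : ℕ => ((e i : ℝ))) ⊆ ↑(R xs).support := by
    rintro _ ⟨i, rfl⟩
    exact Finsupp.mem_support_iff.mpr (hxs i)
  have hinj : Function.Injective fun i : ℕ => ((e i : ℝ)) :=
    fun a b hab => e.injective (Subtype.ext hab)
  exact (Set.infinite_range_of_injective hinj)
    ((R xs).support.finite_toSet.subset hrange)
end

section
/- Let $X$ be a locally convex space carrying the final locally convex topology induced by a family of linear maps $u_i : X_i \to X$ from Fréchet spaces $X_i$ (in particular, $X$ may be an inductive limit of Fréchet spaces, such as an LF-space). Let $(y_n)$ be a sequence in $X'$ such that for each $x \in X$ the finite part limit $Y(x) = \mathrm{F.p.}\lim_{n\to\infty} \langle y_n, x\rangle$ exists. Then $Y \in X'$, and each coefficient functional $R_{\alpha}$ is continuous. -/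
open Filter

namespace FPAux


noncomputable def nu (n : ℕ) : ℝ := (n : ℝ) + 1

lemma nu_pos (n : ℕ) : 0 < nu n := by unfold nu; positivity

lemma nu_atTop : Tendsto nu atTop atTop :=
  tendsto_atTop_add_const_right _ 1 tendsto_natCast_atTop_atTop

lemma nu_rpow_tendsto_zero {γ : ℝ} (hγ : γ < 0) :
    Tendsto (fun n => nu n ^ γ) atTop (nhds 0) := by
  have := (tendsto_rpow_neg_atTop (y := -γ) (by linarith)).comp nu_atTop
  rw [neg_neg] at this
  exact this

variable {K : Type*} [RCLike K]

lemma bounded_of_tendsto {z : ℕ → K} {Y : K} (h : Tendsto z atTop (nhds Y)) :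
    ∃ C : ℝ, ∀ n, ‖z n‖ ≤ C := by
  obtain ⟨C, hC⟩ := (h.norm.bddAbove_range)
  exact ⟨C, fun n => hC ⟨n, rfl⟩⟩

/-- linear independence of distinct powers modulo bounded sequences -/
lemma indep {T : Finset ℝ} {d : ℝ → K} {C : ℝ}
    (hb : ∀ n : ℕ, ‖∑ α ∈ T, (nu n ^ α) • d α‖ ≤ C) :
    ∀ α ∈ T, 0 < α → d α = 0 := by
  by_contra hcon
  push_neg at hcon
  obtain ⟨α₀, hα₀T, hα₀pos, hdα₀⟩ := hcon
  classical
  set T' := T.filter (fun α => 0 < α ∧ d α ≠ 0) with hT'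
  have hne : T'.Nonempty := ⟨α₀, by simp [hT', hα₀T, hα₀pos, hdα₀]⟩
  set β := T'.max' hne with hβ
  have hβT' : β ∈ T' := T'.max'_mem hne
  have hβT : β ∈ T := (Finset.mem_filter.1 hβT').1
  have hβpos : 0 < β := (Finset.mem_filter.1 hβT').2.1
  have hdβ : d β ≠ 0 := (Finset.mem_filter.1 hβT').2.2
  -- the rescaled sums
  have key : ∀ n, (nu n ^ (-β)) • ∑ α ∈ T, (nu n ^ α) • d α
      = ∑ α ∈ T, (nu n ^ (α - β)) • d α := by
    intro n
    rw [Finset.smul_sum]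
    refine Finset.sum_congr rfl fun α _ => ?_
    rw [smul_smul, ← Real.rpow_add (nu_pos n)]
    ring_nf
  have lim1 : Tendsto (fun n => ∑ α ∈ T, (nu n ^ (α - β)) • d α) atTop (nhds (d β)) := by
    have : Tendsto (fun n => ∑ α ∈ T, (nu n ^ (α - β)) • d α) atTop
        (nhds (∑ α ∈ T, if α = β then d β else 0)) := by
      refine tendsto_finset_sum _ fun α hα => ?_
      by_cases hαβ : α = β
      · subst hαβ
        simp only [sub_self, Real.rpow_zero, one_smul, if_pos rfl]
        exact tendsto_const_nhds
      · simp only [if_neg hαβ]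
        by_cases hd : d α = 0
        · simp [hd]
        · have hαβlt : α - β < 0 := by
            have : α ∈ T' → α ≤ β := fun h => T'.le_max' _ h
            rcases lt_or_ge 0 α with hpos | hnonpos
            · have hmem : α ∈ T' := by simp [hT', hα, hpos, hd]
              have := T'.le_max' α hmem
              rw [← hβ] at this
              cases' this.lt_or_eq with hlt heq
              · linarith
              · exact absurd heq hαβ
            · linarith
          have h0 := (nu_rpow_tendsto_zero hαβlt).smul_const (d α)
          simpa using h0
    convert this using 2
    rw [Finset.sum_ite_eq' T β (fun _ => d β)]
    simp [hβT]
  have lim2 : Tendsto (fun n => (nu n ^ (-β)) • ∑ α ∈ T, (nu n ^ α) • d α) atTop (nhds 0) := by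
    apply squeeze_zero_norm (a := fun n => C * nu n ^ (-β))
    · intro n
      rw [norm_smul]
      have h1 : ‖nu n ^ (-β)‖ = nu n ^ (-β) := by
        rw [Real.norm_eq_abs, abs_of_pos (Real.rpow_pos_of_pos (nu_pos n) _)]
      rw [h1, mul_comm]
      exact mul_le_mul_of_nonneg_right (hb n) (le_of_lt (Real.rpow_pos_of_pos (nu_pos n) _))
    · have := (nu_rpow_tendsto_zero (by linarith : -β < 0)).const_mul C
      simpa using this
  rw [show (fun n => (nu n ^ (-β)) • ∑ α ∈ T, (nu n ^ α) • d α)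
    = fun n => ∑ α ∈ T, (nu n ^ (α - β)) • d α from funext key] at lim2
  exact hdβ (by rw [tendsto_nhds_unique lim1 lim2])

/-- Summing over any superset of the support. -/
lemma sum_superset {c : ℝ →₀ K} {T : Finset ℝ} (hT : c.support ⊆ T) (x : ℝ) :
    ∑ α ∈ T, (x ^ α) • c α = ∑ α ∈ c.support, (x ^ α) • c α := by
  refine (Finset.sum_subset hT fun α _ hα => ?_).symm
  rw [Finsupp.notMem_support_iff.1 hα, smul_zero]

lemma uniq {a : ℕ → K} {R R' : ℝ →₀ K} {z z' : ℕ → K} {Y Y' : K}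
    (h : FPDecomp a R z Y) (h' : FPDecomp a R' z' Y') : R = R' ∧ Y = Y' := by
  classical
  obtain ⟨hpos, heq, hz⟩ := h
  obtain ⟨hpos', heq', hz'⟩ := h'
  set T := R.support ∪ R'.support with hT
  have hsub : R.support ⊆ T := Finset.subset_union_left
  have hsub' : R'.support ⊆ T := Finset.subset_union_right
  have key : ∀ n : ℕ, ∑ α ∈ T, (nu n ^ α) • (R α - R' α) = z' (n+1) - z (n+1) := by
    intro n
    have e1 := heq (n+1)
    have e2 := heq' (n+1)
    have hcast : ((n+1 : ℕ) : ℝ) = nu n := by simp [nu]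
    rw [e2] at e1
    have : ∑ α ∈ T, (nu n ^ α) • (R α - R' α)
        = ∑ α ∈ T, (nu n ^ α) • R α - ∑ α ∈ T, (nu n ^ α) • R' α := by
      rw [← Finset.sum_sub_distrib]
      exact Finset.sum_congr rfl fun α _ => smul_sub _ _ _
    rw [this, sum_superset hsub, sum_superset hsub', ← hcast]
    linear_combination -e1
  obtain ⟨C, hC⟩ := bounded_of_tendsto ((hz'.sub hz).comp (tendsto_add_atTop_nat 1))
  have hC' : ∀ n : ℕ, ‖∑ α ∈ T, (nu n ^ α) • ((R : ℝ → K) α - R' α)‖ ≤ C := by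
    intro n; rw [key n]; exact hC n
  have hzero := indep hC'
  have hRR' : R = R' := by
    ext α
    by_cases hα : α ∈ T
    · have hposα : 0 < α := by
        rcases Finset.mem_union.1 hα with h1 | h1
        exacts [hpos α h1, hpos' α h1]
      exact sub_eq_zero.1 (hzero α hα hposα)
    · have h1 : R α = 0 := Finsupp.notMem_support_iff.1 fun hc => hα (hsub hc)
      have h2 : R' α = 0 := Finsupp.notMem_support_iff.1 fun hc => hα (hsub' hc)
      rw [h1, h2]
  subst hRR'
  have hzz : z = z' := by
    funext n
    have e1 := heq n
    have e2 := heq' n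
    rw [e1] at e2
    exact add_left_cancel e2
  subst hzz
  exact ⟨rfl, tendsto_nhds_unique hz hz'⟩

lemma fpd_add {a a' : ℕ → K} {R R' : ℝ →₀ K} {z z' : ℕ → K} {Y Y' : K}
    (h : FPDecomp a R z Y) (h' : FPDecomp a' R' z' Y') :
    FPDecomp (fun n => a n + a' n) (R + R') (fun n => z n + z' n) (Y + Y') := by
  classical
  obtain ⟨hp, he, ht⟩ := h
  obtain ⟨hp', he', ht'⟩ := h'
  refine ⟨?_, ?_, ht.add ht'⟩
  · intro α hα
    rcases Finset.mem_union.1 (Finsupp.support_add hα) with h1 | h1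
    exacts [hp α h1, hp' α h1]
  · intro n
    have hsub : (R + R').support ⊆ R.support ∪ R'.support := Finsupp.support_add
    rw [← sum_superset hsub]
    have : ∑ α ∈ R.support ∪ R'.support, ((n:ℝ) ^ α) • (R + R') α
        = ∑ α ∈ R.support ∪ R'.support, ((n:ℝ) ^ α) • R α
          + ∑ α ∈ R.support ∪ R'.support, ((n:ℝ) ^ α) • R' α := by
      rw [← Finset.sum_add_distrib]
      refine Finset.sum_congr rfl fun α _ => ?_
      rw [Finsupp.add_apply, smul_add]
    rw [this, sum_superset (Finset.subset_union_left (s₂ := R'.support)),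
      sum_superset (Finset.subset_union_right (s₁ := R.support))]
    simp only [he n, he' n]
    ring
  
lemma fpd_smul (k : K) {a : ℕ → K} {R : ℝ →₀ K} {z : ℕ → K} {Y : K}
    (h : FPDecomp a R z Y) :
    FPDecomp (fun n => k * a n) (k • R) (fun n => k * z n) (k * Y) := by
  classical
  obtain ⟨hp, he, ht⟩ := h
  refine ⟨?_, ?_, ?_⟩
  · intro α hα
    exact hp α (Finsupp.support_smul hα)
  · intro n
    rw [← sum_superset (Finsupp.support_smul (b := k) (g := R))]
    have : ∑ α ∈ R.support, ((n:ℝ) ^ α) • (k • R) α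
        = k * ∑ α ∈ R.support, ((n:ℝ) ^ α) • R α := by
      rw [Finset.mul_sum]
      refine Finset.sum_congr rfl fun α _ => ?_
      rw [Finsupp.smul_apply, smul_eq_mul, mul_smul_comm]
    rw [this]
    simp only [he n]
    ring
  · simpa using ht.const_mul k

variable {K : Type*} [RCLike K] {E : Type*} [AddCommGroup E] [Module K E]
  [UniformSpace E] [IsUniformAddGroup E] [ContinuousSMul K E] [BarrelledSpace K E]

lemma peel : ∀ (N : ℕ) (Γ : Finset ℝ), Γ.card = N → (∀ α ∈ Γ, (0:ℝ) < α) →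
    ∀ (g : ℕ → E →L[K] K) (cc : E → ℝ → K) (w : E → ℕ → K) (L : E → K),
    (∀ ξ n, g n ξ = ∑ α ∈ Γ, ((nu n) ^ α) • cc ξ α + w ξ n) →
    (∀ ξ, Tendsto (w ξ) atTop (nhds (L ξ))) →
    (∀ α ∈ Γ, ∃ G : E →L[K] K, ∀ ξ, G ξ = cc ξ α) ∧
      (∃ G : E →L[K] K, ∀ ξ, G ξ = L ξ) := by
  intro N
  induction N with
  | zero =>
    intro Γ hcard _ g cc w L heq hw
    rw [Finset.card_eq_zero] at hcard
    subst hcard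
    have htends : Tendsto (fun n (ξ : E) => g n ξ) atTop (nhds L) := by
      refine tendsto_pi_nhds.mpr fun ξ => ?_
      have : (fun n => g n ξ) = fun n => w ξ n := by
        funext n; simpa using heq ξ n
      rw [this]; exact hw ξ
    refine ⟨fun α hα => absurd hα (by simp), ?_⟩
    exact ⟨(norm_withSeminorms K K).continuousLinearMapOfTendsto g htends,
      fun ξ => rfl⟩
  | succ N ih =>
    intro Γ hcard hpos g cc w L heq hw
    classical
    have hne : Γ.Nonempty := Finset.card_pos.1 (by omega)
    set β := Γ.max' hne with hβdef
    have hβΓ : β ∈ Γ := Γ.max'_mem hne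
    have hβpos : 0 < β := hpos β hβΓ
    -- rescaled sequence
    set g1 : ℕ → E →L[K] K := fun n => (((nu n ^ (-β) : ℝ) : K)) • g n with hg1
    have hg1eval : ∀ n ξ, g1 n ξ = ((nu n ^ (-β) : ℝ) : K) * g n ξ := fun n ξ => rfl
    have hlim : ∀ ξ : E, Tendsto (fun n => g1 n ξ) atTop (nhds (cc ξ β)) := by
      intro ξ
      have hrw : ∀ n, g1 n ξ
          = ∑ α ∈ Γ, ((nu n ^ (α - β) : ℝ) : K) * cc ξ α
            + ((nu n ^ (-β) : ℝ) : K) * w ξ n := by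
        intro n
        rw [hg1eval, heq ξ n, mul_add, Finset.mul_sum]
        congr 1
        refine Finset.sum_congr rfl fun α _ => ?_
        rw [RCLike.real_smul_eq_coe_mul, ← mul_assoc, ← RCLike.ofReal_mul,
          ← Real.rpow_add (nu_pos n)]
        ring_nf
      rw [show (fun n => g1 n ξ) = _ from funext hrw]
      have h1 : Tendsto (fun n => ∑ α ∈ Γ, ((nu n ^ (α - β) : ℝ) : K) * cc ξ α)
          atTop (nhds (∑ α ∈ Γ, if α = β then cc ξ β else 0)) := by
        refine tendsto_finset_sum _ fun α hα => ?_
        by_cases hαβ : α = β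
        · subst hαβ
          simp only [sub_self, Real.rpow_zero, RCLike.ofReal_one, one_mul, if_pos rfl]
          exact tendsto_const_nhds
        · have hlt : α - β < 0 := by
            have := Γ.le_max' α hα
            rw [← hβdef] at this
            rcases this.lt_or_eq with h | h
            · linarith
            · exact absurd h hαβ
          rw [if_neg hαβ]
          have h0 : Tendsto (fun n => ((nu n ^ (α - β) : ℝ) : K)) atTop (nhds 0) := by
            have := (RCLike.continuous_ofReal (K := K)).tendsto 0
            have h2 := this.comp (nu_rpow_tendsto_zero hlt)
            rw [RCLike.ofReal_zero] at h2
            exact h2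
          simpa using h0.mul_const (cc ξ α)
      have h2 : Tendsto (fun n => ((nu n ^ (-β) : ℝ) : K) * w ξ n) atTop (nhds 0) := by
        have h0 : Tendsto (fun n => ((nu n ^ (-β) : ℝ) : K)) atTop (nhds 0) := by
          have := (RCLike.continuous_ofReal (K := K)).tendsto 0
          have h2 := this.comp (nu_rpow_tendsto_zero (by linarith : -β < 0))
          rw [RCLike.ofReal_zero] at h2
          exact h2
        simpa using h0.mul (hw ξ)
      have := h1.add h2
      rw [Finset.sum_ite_eq' Γ β (fun _ => cc ξ β), if_pos hβΓ, add_zero] at this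
      exact this
    set Gβ : E →L[K] K :=
      (norm_withSeminorms K K).continuousLinearMapOfTendsto g1 (tendsto_pi_nhds.mpr hlim)
      with hGβdef
    have hGβ : ∀ ξ, Gβ ξ = cc ξ β := fun ξ => rfl
    set g2 : ℕ → E →L[K] K := fun n => g n - (((nu n ^ β : ℝ) : K)) • Gβ with hg2
    have heq2 : ∀ ξ n, g2 n ξ = ∑ α ∈ Γ.erase β, ((nu n) ^ α) • cc ξ α + w ξ n := by
      intro ξ n
      have : g2 n ξ = g n ξ - ((nu n ^ β : ℝ) : K) * cc ξ β := by
        have h0 : g2 n ξ = g n ξ - ((nu n ^ β : ℝ) : K) * Gβ ξ := rfl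
        rw [h0, hGβ ξ]
      have hmul : (nu n ^ β) • cc ξ β = ((nu n ^ β : ℝ) : K) * cc ξ β :=
        RCLike.real_smul_eq_coe_mul _ _
      rw [this, heq ξ n, ← Finset.add_sum_erase Γ _ hβΓ, hmul]
      ring
    have hcard2 : (Γ.erase β).card = N := by
      rw [Finset.card_erase_of_mem hβΓ, hcard]
      omega
    have hpos2 : ∀ α ∈ Γ.erase β, (0:ℝ) < α := fun α hα => hpos α (Finset.mem_of_mem_erase hα)
    obtain ⟨ihc, ihL⟩ := ih (Γ.erase β) hcard2 hpos2 g2 cc w L heq2 hw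
    refine ⟨fun α hα => ?_, ihL⟩
    by_cases hαβ : α = β
    · subst hαβ; exact ⟨Gβ, hGβ⟩
    · exact ihc α (Finset.mem_erase.2 ⟨hαβ, hα⟩)

variable {K : Type*} [RCLike K]

/-- padding/reindexing a finite supported family into a `Fin k`-indexed family -/
lemma pad (g : ℝ → K) : ∀ (k : ℕ) (S : Finset ℝ), S.card ≤ k →
    ∃ (A : Fin k → ℝ) (cf : Fin k → K),
      (∀ j, A j = 0 ∨ A j ∈ S) ∧ (∀ j, cf j = 0 ∨ ∃ α ∈ S, A j = α ∧ cf j = g α) ∧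
      ∀ x : ℝ, ∑ j, (x ^ A j) • cf j = ∑ α ∈ S, (x ^ α) • g α := by
  intro k
  induction k with
  | zero =>
    intro S hS
    rw [Nat.le_zero, Finset.card_eq_zero] at hS
    subst hS
    exact ⟨fun j => 0, fun j => 0, fun j => Or.inl rfl, fun j => Or.inl rfl,
      fun x => by simp⟩
  | succ k ih =>
    intro S hS
    classical
    rcases S.eq_empty_or_nonempty with hSe | hSn
    · subst hSe
      exact ⟨fun j => 0, fun j => 0, fun j => Or.inl rfl, fun j => Or.inl rfl,
        fun x => by simp⟩
    · obtain ⟨a, ha⟩ := hSn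
      have hcard : (S.erase a).card ≤ k := by
        have := Finset.card_erase_of_mem ha
        omega
      obtain ⟨A', cf', hA', hcf', hsum'⟩ := ih (S.erase a) hcard
      refine ⟨Fin.cons a A', Fin.cons (g a) cf', ?_, ?_, ?_⟩
      · intro j
        refine Fin.cases ?_ ?_ j
        · exact Or.inr (by simpa using ha)
        · intro j'
          simp only [Fin.cons_succ]
          rcases hA' j' with h | h
          exacts [Or.inl h, Or.inr (Finset.mem_of_mem_erase h)]
      · intro j
        refine Fin.cases ?_ ?_ j
        · exact Or.inr ⟨a, ha, by simp⟩
        · intro j'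
          simp only [Fin.cons_succ]
          rcases hcf' j' with h | h
          · exact Or.inl h
          · obtain ⟨α, hα, h1, h2⟩ := h
            exact Or.inr ⟨α, Finset.mem_of_mem_erase hα, h1, h2⟩
      · intro x
        rw [Fin.sum_univ_succ]
        simp only [Fin.cons_zero, Fin.cons_succ]
        rw [hsum' x]
        exact Finset.add_sum_erase S (fun α => x ^ α • g α) ha

/-- The compact data space of at most `k` exponents in `[0,k]` with coefficients of norm `≤ k`. -/
def Dspace (K : Type*) [RCLike K] (k : ℕ) : Type _ :=
  (Fin k → Set.Icc (0:ℝ) (k:ℝ)) × (Fin k → Metric.closedBall (0:K) (k:ℝ))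

noncomputable instance (k : ℕ) : TopologicalSpace (Dspace K k) := by
  unfold Dspace; infer_instance

instance Dspace_compact (k : ℕ) : CompactSpace (Dspace K k) := by
  have h1 : CompactSpace (Metric.closedBall (0:K) (k:ℝ)) :=
    isCompact_iff_compactSpace.mp (isCompact_closedBall _ _)
  unfold Dspace
  infer_instance

noncomputable def spSum (k : ℕ) (p : Dspace K k) (n : ℕ) : K :=
  ∑ j, ((nu n) ^ ((p.1 j : ℝ))) • ((p.2 j : K))

lemma spSum_cont (k n : ℕ) : Continuous (fun p : Dspace K k => spSum k p n) := by
  unfold spSum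
  refine continuous_finset_sum _ fun j _ => Continuous.smul ?_ ?_
  · have : (fun p : Dspace K k => (nu n) ^ ((p.1 j : ℝ)))
        = fun p => Real.exp (Real.log (nu n) * (p.1 j : ℝ)) := by
      funext p
      exact Real.rpow_def_of_pos (nu_pos n) _
    rw [this]
    exact Real.continuous_exp.comp (continuous_const.mul
      (continuous_subtype_val.comp ((continuous_apply j).comp continuous_fst)))
  · exact continuous_subtype_val.comp ((continuous_apply j).comp continuous_snd)

variable {E : Type*} [AddCommGroup E] [Module K E] [TopologicalSpace E]

/-- The "uniformly finite-part-bounded" sets. -/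
def Bset (k : ℕ) (f : ℕ → E →L[K] K) : Set E :=
  ⋂ N : ℕ, (fun ξ (n : Fin (N+1)) => f n ξ) ⁻¹'
    {v | ∃ p : Dspace K k, ∀ n : Fin (N+1), ‖v n - spSum k p n‖ ≤ k}

lemma Bset_closed (k : ℕ) (f : ℕ → E →L[K] K) : IsClosed (Bset k f) := by
  refine isClosed_iInter fun N => IsClosed.preimage
    (continuous_pi fun n : Fin (N+1) => (f (n:ℕ)).continuous) ?_
  have hrange : {v : Fin (N+1) → K | ∃ p : Dspace K k, ∀ n, ‖v n - spSum k p n‖ ≤ k}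
      = Set.range (fun q : Dspace K k × (Fin (N+1) → Metric.closedBall (0:K) (k:ℝ)) =>
          fun n : Fin (N+1) => spSum k q.1 (n:ℕ) + (q.2 n : K)) := by
    ext v
    constructor
    · rintro ⟨p, hp⟩
      refine ⟨⟨p, fun n => ⟨v n - spSum k p n, ?_⟩⟩, ?_⟩
      · rw [Metric.mem_closedBall, dist_zero_right]
        exact hp n
      · funext n; simp
    · rintro ⟨q, rfl⟩
      refine ⟨q.1, fun n => ?_⟩
      simpa using (Metric.mem_closedBall.1 (q.2 n).2)
  rw [hrange]
  have h1 : CompactSpace (Metric.closedBall (0:K) (k:ℝ)) :=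
    isCompact_iff_compactSpace.mp (isCompact_closedBall _ _)
  refine IsCompact.isClosed (isCompact_range ?_)
  refine continuous_pi fun n => Continuous.add ?_ ?_
  · exact (spSum_cont k n).comp continuous_fst
  · exact continuous_subtype_val.comp ((continuous_apply n).comp continuous_snd)

lemma mem_Bset {k : ℕ} {f : ℕ → E →L[K] K} {ξ : E} :
    ξ ∈ Bset k f ↔ ∀ N, ∃ p : Dspace K k, ∀ n ≤ N, ‖f n ξ - spSum k p n‖ ≤ k := by
  simp only [Bset, Set.mem_iInter, Set.mem_preimage, Set.mem_setOf_eq]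
  constructor
  · intro h N
    obtain ⟨p, hp⟩ := h N
    exact ⟨p, fun n hn => hp ⟨n, Nat.lt_succ_of_le hn⟩⟩
  · intro h N
    obtain ⟨p, hp⟩ := h N
    exact ⟨p, fun n => hp n (Nat.lt_succ_iff.1 n.isLt)⟩

lemma Bset_single {k : ℕ} {f : ℕ → E →L[K] K} {ξ : E} (hξ : ξ ∈ Bset k f) :
    ∃ p : Dspace K k, ∀ n, ‖f n ξ - spSum k p n‖ ≤ k := by
  rw [mem_Bset] at hξ
  set V : ℕ → Set (Dspace K k) :=
    fun N => {p | ∀ n ≤ N, ‖f n ξ - spSum k p n‖ ≤ k} with hV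
  have hVclosed : ∀ N, IsClosed (V N) := by
    intro N
    have : V N = ⋂ (n : ℕ) (_ : n ≤ N), {p : Dspace K k | ‖f n ξ - spSum k p n‖ ≤ k} := by
      ext p; simp [hV]
    rw [this]
    refine isClosed_iInter fun n => isClosed_iInter fun _ => ?_
    exact isClosed_le ((continuous_const.sub (spSum_cont k n)).norm) continuous_const
  have hVanti : ∀ N, V (N+1) ⊆ V N := fun N p hp n hn => hp n (hn.trans (Nat.le_succ N))
  have hVne : ∀ N, (V N).Nonempty := fun N => hξ N
  have := IsCompact.nonempty_iInter_of_sequence_nonempty_isCompact_isClosed V hVanti hVne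
    ((hVclosed 0).isCompact) hVclosed
  obtain ⟨p, hp⟩ := this
  rw [Set.mem_iInter] at hp
  exact ⟨p, fun n => hp n n le_rfl⟩


section FrechetMain

variable {K : Type*} [RCLike K] {E : Type*} [AddCommGroup E] [Module K E]
  [Module ℝ E] [IsScalarTower ℝ K E] [UniformSpace E] [IsUniformAddGroup E]
  [ContinuousSMul K E] [CompleteSpace E] [TopologicalSpace.MetrizableSpace E]

theorem frechet_main (f : ℕ → E →L[K] K) (c : E → ℝ →₀ K) (zz : E → ℕ → K) (L : E → K)
    (hfp : ∀ ξ : E, FPDecomp (fun n => f n ξ) (c ξ) (zz ξ) (L ξ)) :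
    (∃ G : E →L[K] K, ∀ ξ, G ξ = L ξ) ∧
    ∀ α : ℝ, ∃ G : E →L[K] K, ∀ ξ, G ξ = c ξ α := by
  classical
  haveI : ContinuousSMul ℝ E := by
    refine ⟨?_⟩
    have hh : (fun p : ℝ × E => p.1 • p.2) = fun p : ℝ × E => ((p.1 : K)) • p.2 := by
      funext p; exact RCLike.real_smul_eq_coe_smul p.1 p.2
    rw [hh]
    exact ((RCLike.continuous_ofReal).comp continuous_fst).smul continuous_snd
  haveI : BaireSpace E := by
    haveI : (uniformity E).IsCountablyGenerated := by
      rw [uniformity_eq_comap_nhds_zero]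
      exact Filter.comap.isCountablyGenerated _ _
    letI := UniformSpace.pseudoMetricSpace E
    exact BaireSpace.of_completelyPseudoMetrizable
  -- the shifted sequence of functionals
  set F : ℕ → E →L[K] K := fun n => f (n+1) with hF
  have hFeq : ∀ ξ n, F n ξ = ∑ α ∈ (c ξ).support, ((nu n) ^ α) • c ξ α + zz ξ (n+1) := by
    intro ξ n
    have h1 := (hfp ξ).2.1 (n+1)
    have hcast : ((n+1 : ℕ) : ℝ) = nu n := by simp [nu]
    simp only [hF]
    rw [show F n ξ = f (n+1) ξ from rfl]  -- no-op safety
    simpa [hcast] using h1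
  -- coverage of E by the Bsets
  have hcover : ∀ ξ : E, ∃ k : ℕ, ξ ∈ Bset k F := by
    intro ξ
    obtain ⟨Cz, hCz⟩ := bounded_of_tendsto (hfp ξ).2.2
    obtain ⟨M1, hM1⟩ : ∃ M : ℝ, ∀ α ∈ (c ξ).support, α ≤ M := by
      rcases (c ξ).support.eq_empty_or_nonempty with he | hne
      · exact ⟨0, by simp [he]⟩
      · exact ⟨(c ξ).support.max' hne, fun α hα => Finset.le_max' _ α hα⟩
    obtain ⟨M2, hM2⟩ : ∃ M : ℝ, ∀ α ∈ (c ξ).support, ‖c ξ α‖ ≤ M := by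
      rcases (c ξ).support.eq_empty_or_nonempty with he | hne
      · exact ⟨0, by simp [he]⟩
      · refine ⟨(c ξ).support.sup' hne fun α => ‖c ξ α‖, fun α hα => Finset.le_sup' (fun α => ‖c ξ α‖) hα⟩
    set k : ℕ := max ((c ξ).support.card) (Nat.ceil (max (max M1 M2) (max Cz 0))) with hk
    have hcard : (c ξ).support.card ≤ k := le_max_left _ _
    have hkR : (Nat.ceil (max (max M1 M2) (max Cz 0)) : ℝ) ≤ (k : ℝ) := by
      exact_mod_cast Nat.cast_le.2 (le_max_right _ _)
    have hbig : max (max M1 M2) (max Cz 0) ≤ (k : ℝ) :=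
      le_trans (Nat.le_ceil _) hkR
    have hM1k : M1 ≤ (k:ℝ) := le_trans (le_trans (le_max_left _ _) (le_max_left _ _)) hbig
    have hM2k : M2 ≤ (k:ℝ) := le_trans (le_trans (le_max_right _ _) (le_max_left _ _)) hbig
    have hCzk : Cz ≤ (k:ℝ) := le_trans (le_trans (le_max_left _ _) (le_max_right _ _)) hbig
    obtain ⟨A, cf, hA, hcf, hsum⟩ := pad (fun α => c ξ α) k (c ξ).support hcard
    have hAmem : ∀ j, A j ∈ Set.Icc (0:ℝ) (k:ℝ) := by
      intro j
      rcases hA j with h | h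
      · rw [h]; exact ⟨le_rfl, by positivity⟩
      · exact ⟨((hfp ξ).1 _ h).le, le_trans (hM1 _ h) hM1k⟩
    have hcfmem : ∀ j, cf j ∈ Metric.closedBall (0:K) (k:ℝ) := by
      intro j
      rw [Metric.mem_closedBall, dist_zero_right]
      rcases hcf j with h | h
      · rw [h, norm_zero]; positivity
      · obtain ⟨α, hα, _, h2⟩ := h
        rw [h2]
        exact le_trans (hM2 _ hα) hM2k
    set p : Dspace K k := (fun j => ⟨A j, hAmem j⟩, fun j => ⟨cf j, hcfmem j⟩) with hp
    have hsp : ∀ n, spSum k p n = ∑ α ∈ (c ξ).support, ((nu n) ^ α) • c ξ α := by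
      intro n
      unfold spSum
      simpa [hp] using hsum (nu n)
    refine ⟨k, mem_Bset.2 fun N => ⟨p, fun n _ => ?_⟩⟩
    rw [hFeq ξ n, hsp n]
    simpa using le_trans (hCz (n+1)) hCzk
  -- Baire category
  obtain ⟨k0, x0, hx0⟩ : ∃ k0 : ℕ, ∃ x0 : E, x0 ∈ interior (Bset k0 F) := by
    obtain ⟨k0, hne⟩ := nonempty_interior_of_iUnion_of_closed
      (fun k : ℕ => Bset_closed k F)
      (Set.eq_univ_of_forall fun ξ => Set.mem_iUnion.2 (hcover ξ))
    obtain ⟨x0, hx0⟩ := hne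
    exact ⟨k0, x0, hx0⟩
  -- uniform data for every ξ
  have hunif : ∀ ξ : E, ∃ (A : Fin (k0+k0) → ℝ) (cf : Fin (k0+k0) → K) (C : ℝ),
      ∀ n, ‖F n ξ - ∑ j, ((nu n) ^ A j) • cf j‖ ≤ C := by
    intro ξ
    have hmap : Continuous fun s : ℝ => x0 + s • ξ :=
      continuous_const.add (continuous_id.smul continuous_const)
    have hnb : {s : ℝ | x0 + s • ξ ∈ interior (Bset k0 F)} ∈ nhds (0:ℝ) := by
      have h1 := hmap.continuousAt (x := (0:ℝ))
      have h2 : interior (Bset k0 F) ∈ nhds (x0 + (0:ℝ) • ξ) := by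
        rw [show x0 + (0:ℝ) • ξ = x0 by simp]
        exact isOpen_interior.mem_nhds hx0
      exact h1.preimage_mem_nhds h2
    obtain ⟨ε, hε, hball⟩ := Metric.mem_nhds_iff.1 hnb
    set t : ℝ := ε/2 with htdef
    have ht0 : t ≠ 0 := by positivity
    have htmem : x0 + t • ξ ∈ Bset k0 F := by
      refine interior_subset (hball ?_)
      rw [Metric.mem_ball, Real.dist_eq, sub_zero, abs_of_pos (by positivity)]
      linarith
    obtain ⟨p1, hp1⟩ := Bset_single htmem
    obtain ⟨p0, hp0⟩ := Bset_single (interior_subset hx0)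
    set tc : K := ((t : ℝ) : K) with htc
    have htc0 : tc ≠ 0 := by
      simpa [htc] using (RCLike.ofReal_ne_zero (K := K)).2 ht0
    refine ⟨Fin.append (fun j => ((p1.1 j : ℝ))) (fun j => ((p0.1 j : ℝ))),
      Fin.append (fun j => tc⁻¹ * (p1.2 j : K)) (fun j => -(tc⁻¹) * (p0.2 j : K)),
      ‖tc⁻¹‖ * ((k0:ℝ) + (k0:ℝ)), fun n => ?_⟩
    have hsplit : (∑ j : Fin (k0+k0), ((nu n) ^ (Fin.append (fun j => ((p1.1 j : ℝ)))
          (fun j => ((p0.1 j : ℝ))) j)) • (Fin.append (fun j => tc⁻¹ * (p1.2 j : K))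
          (fun j => -(tc⁻¹) * (p0.2 j : K)) j))
        = tc⁻¹ * spSum k0 p1 n - tc⁻¹ * spSum k0 p0 n := by
      rw [Fin.sum_univ_add]
      simp only [Fin.append_left, Fin.append_right]
      unfold spSum
      rw [Finset.mul_sum, Finset.mul_sum]
      rw [sub_eq_add_neg, ← Finset.sum_neg_distrib]
      congr 1
      · exact Finset.sum_congr rfl fun j _ => by
          rw [RCLike.real_smul_eq_coe_mul, RCLike.real_smul_eq_coe_mul]; ring
      · exact Finset.sum_congr rfl fun j _ => by
          rw [RCLike.real_smul_eq_coe_mul, RCLike.real_smul_eq_coe_mul]; ring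
    rw [hsplit]
    have hlin : F n ξ = tc⁻¹ * (F n (x0 + t • ξ) - F n x0) := by
      have h1 : F n (x0 + t • ξ) = F n x0 + tc * F n ξ := by
        have : t • ξ = tc • ξ := by
          rw [htc]; exact RCLike.real_smul_eq_coe_smul t ξ
        rw [this, map_add, map_smul, smul_eq_mul]
      rw [h1]
      field_simp
      ring
    rw [hlin]
    have halg : tc⁻¹ * (F n (x0 + t • ξ) - F n x0)
          - (tc⁻¹ * spSum k0 p1 n - tc⁻¹ * spSum k0 p0 n)
        = tc⁻¹ * ((F n (x0 + t • ξ) - spSum k0 p1 n) - (F n x0 - spSum k0 p0 n)) := by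
      ring
    rw [halg, norm_mul]
    refine mul_le_mul_of_nonneg_left ?_ (norm_nonneg _)
    exact le_trans (norm_sub_le _ _) (add_le_add (hp1 n) (hp0 n))
  -- uniform bound on the size of supports
  have hcard_all : ∀ ξ : E, (c ξ).support.card ≤ k0 + k0 := by
    intro ξ
    obtain ⟨A, cf, C, hbd⟩ := hunif ξ
    obtain ⟨Cz, hCz⟩ := bounded_of_tendsto (hfp ξ).2.2
    set T : Finset ℝ := (c ξ).support ∪ Finset.image A Finset.univ with hT
    set d : ℝ → K := fun β => c ξ β - ∑ j ∈ Finset.univ.filter (fun j => A j = β), cf j with hd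
    have hkey : ∀ n, ∑ β ∈ T, ((nu n)^β) • d β
        = (F n ξ - ∑ j, ((nu n) ^ A j) • cf j) - zz ξ (n+1) := by
      intro n
      have hsplit : ∑ β ∈ T, ((nu n)^β) • d β
          = ∑ β ∈ T, ((nu n)^β) • c ξ β
            - ∑ β ∈ T, ∑ j ∈ Finset.univ.filter (fun j => A j = β), ((nu n) ^ A j) • cf j := by
        rw [← Finset.sum_sub_distrib]
        refine Finset.sum_congr rfl fun β hβ => ?_
        rw [hd, smul_sub, Finset.smul_sum]
        congr 1
        refine Finset.sum_congr rfl fun j hj => ?_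
        rw [(Finset.mem_filter.1 hj).2]
      rw [hsplit]
      rw [Finset.sum_fiberwise_of_maps_to
        (fun j _ => Finset.mem_union_right _ (Finset.mem_image_of_mem A (Finset.mem_univ j)))
        (fun j => ((nu n) ^ A j) • cf j)]
      rw [sum_superset (Finset.subset_union_left (s₂ := Finset.image A Finset.univ)), hFeq ξ n]
      ring
    have hbound : ∀ n, ‖∑ β ∈ T, ((nu n)^β) • d β‖ ≤ C + Cz := by
      intro n
      rw [hkey n]
      exact le_trans (norm_sub_le _ _) (add_le_add (hbd n) (hCz (n+1)))
    have hzero := indep hbound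
    have hsub : (c ξ).support ⊆ Finset.image A Finset.univ := by
      intro α hα
      have hαpos : (0:ℝ) < α := (hfp ξ).1 α hα
      have hdα := hzero α (Finset.mem_union_left _ hα) hαpos
      rw [hd] at hdα
      have hsum0 : c ξ α = ∑ j ∈ Finset.univ.filter (fun j => A j = α), cf j :=
        sub_eq_zero.1 hdα
      by_contra hnot
      have : Finset.univ.filter (fun j => A j = α) = ∅ := by
        refine Finset.filter_eq_empty_iff.2 fun j _ => fun hj => hnot ?_
        exact Finset.mem_image.2 ⟨j, Finset.mem_univ j, hj⟩
      rw [this, Finset.sum_empty] at hsum0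
      exact (Finsupp.mem_support_iff.1 hα) hsum0
    calc (c ξ).support.card ≤ (Finset.image A Finset.univ).card := Finset.card_le_card hsub
      _ ≤ Finset.univ.card := Finset.card_image_le
      _ = k0 + k0 := by simp
  -- linearity of the coefficients
  have hadd : ∀ ξ η : E, c (ξ + η) = c ξ + c η ∧ L (ξ + η) = L ξ + L η := by
    intro ξ η
    have h2 := fpd_add (hfp ξ) (hfp η)
    have hfun : (fun n => f n ξ + f n η) = fun n => f n (ξ + η) :=
      funext fun n => (map_add (f n) ξ η).symm
    rw [hfun] at h2
    exact uniq (hfp (ξ + η)) h2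
  have hsmulc : ∀ (a : K) (ξ : E), c (a • ξ) = a • c ξ ∧ L (a • ξ) = a * L ξ := by
    intro a ξ
    have h2 := fpd_smul a (hfp ξ)
    have hfun : (fun n => a * f n ξ) = fun n => f n (a • ξ) := by
      funext n; rw [map_smul, smul_eq_mul]
    rw [hfun] at h2
    exact uniq (hfp (a • ξ)) h2
  have hc0 : c 0 = 0 := by
    have := (hsmulc 0 0).1
    rw [zero_smul, zero_smul] at this
    exact this
  -- a maximal-support element
  set P : ℕ → Prop := fun m => ∃ ξ : E, (c ξ).support.card = m with hP
  have hP0 : P 0 := ⟨0, by rw [hc0]; simp⟩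
  have hPm0 : P (Nat.findGreatest P (k0+k0)) :=
    Nat.findGreatest_spec (Nat.zero_le _) hP0
  set m0 := Nat.findGreatest P (k0+k0) with hm0
  obtain ⟨ξs, hξs⟩ := hPm0
  have hmax : ∀ ξ : E, (c ξ).support.card ≤ m0 :=
    fun ξ => Nat.le_findGreatest (hcard_all ξ) ⟨ξ, rfl⟩
  have hSigma : ∀ ξ : E, (c ξ).support ⊆ (c ξs).support := by
    intro ξ
    by_contra hns
    obtain ⟨α, hαmem, hαnot⟩ := Finset.not_subset.1 hns
    set bf : Finset K := insert 0 ((c ξs).support.image fun β => - c ξs β / c ξ β) with hbf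
    obtain ⟨t, ht⟩ := Infinite.exists_notMem_finset bf
    have ht0 : t ≠ 0 := fun hteq => ht (hteq ▸ Finset.mem_insert_self _ _)
    have hcz : ∀ β, c (ξs + t • ξ) β = c ξs β + t * c ξ β := by
      intro β
      rw [(hadd ξs (t • ξ)).1, Finsupp.add_apply, (hsmulc t ξ).1, Finsupp.smul_apply,
        smul_eq_mul]
    have hsub2 : insert α (c ξs).support ⊆ (c (ξs + t • ξ)).support := by
      intro β hβ
      rw [Finsupp.mem_support_iff, hcz β]
      rcases Finset.mem_insert.1 hβ with rfl | hβs
      · rw [Finsupp.notMem_support_iff.1 hαnot, zero_add]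
        exact mul_ne_zero ht0 (Finsupp.mem_support_iff.1 hαmem)
      · intro hzero
        have hcβ : c ξs β ≠ 0 := Finsupp.mem_support_iff.1 hβs
        by_cases hcξβ : c ξ β = 0
        · rw [hcξβ, mul_zero, add_zero] at hzero; exact hcβ hzero
        · refine ht (Finset.mem_insert_of_mem (Finset.mem_image.2 ⟨β, hβs, ?_⟩))
          rw [neg_div, neg_eq_iff_eq_neg, div_eq_iff hcξβ]
          linear_combination hzero
    have : m0 + 1 ≤ m0 := by
      calc m0 + 1 = (c ξs).support.card + 1 := by rw [hξs]
        _ = (insert α (c ξs).support).card := (Finset.card_insert_of_notMem hαnot).symm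
        _ ≤ (c (ξs + t • ξ)).support.card := Finset.card_le_card hsub2
        _ ≤ m0 := hmax _
    omega
  -- peel off the finitely many global exponents
  have hpeel := peel (K := K) (E := E) ((c ξs).support.card) ((c ξs).support) rfl
    (hfp ξs).1 F (fun ξ α => c ξ α) (fun ξ n => zz ξ (n+1)) L
    (fun ξ n => by
      rw [hFeq ξ n, sum_superset (hSigma ξ)])
    (fun ξ => (hfp ξ).2.2.comp (tendsto_add_atTop_nat 1))
  obtain ⟨hco, hL⟩ := hpeel
  refine ⟨hL, fun α => ?_⟩
  by_cases hα : α ∈ (c ξs).support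
  · exact hco α hα
  · refine ⟨0, fun ξ => ?_⟩
    rw [ContinuousLinearMap.zero_apply]
    exact (Finsupp.notMem_support_iff.1 fun hmem => hα (hSigma ξ hmem)).symm

end FrechetMain

end FPAux
/-- Let `X` be a locally convex space carrying the final locally convex topology induced by a
family of linear maps `u i : Xᵢ → X` from Fréchet spaces `Xᵢ`; this is expressed by the
characterization that a linear functional on `X` is continuous iff all its pullbacks along the
`u i` are continuous. If `(y n)` is a sequence in `X'` such that the finite part limit
`Y x = F.p. lim ⟨yₙ, x⟩` exists for each `x`, then `Y ∈ X'` and each coefficient functional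
`x ↦ R_α(x)` is continuous (i.e. agrees with a continuous linear functional). -/
theorem finite_part_continuity_inductive_limit {𝕜 : Type*} [RCLike 𝕜] {ι : Type*}
    (Xi : ι → Type*) [∀ i, AddCommGroup (Xi i)] [∀ i, Module 𝕜 (Xi i)]
    [∀ i, Module ℝ (Xi i)] [∀ i, IsScalarTower ℝ 𝕜 (Xi i)] [∀ i, UniformSpace (Xi i)]
    [∀ i, IsUniformAddGroup (Xi i)] [∀ i, ContinuousSMul 𝕜 (Xi i)] [∀ i, CompleteSpace (Xi i)]
    [∀ i, TopologicalSpace.MetrizableSpace (Xi i)] [∀ i, LocallyConvexSpace ℝ (Xi i)]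
    {X : Type*} [AddCommGroup X] [Module 𝕜 X] [Module ℝ X] [IsScalarTower ℝ 𝕜 X]
    [TopologicalSpace X] [IsTopologicalAddGroup X] [ContinuousSMul 𝕜 X]
    [LocallyConvexSpace ℝ X]
    (u : ∀ i, Xi i →ₗ[𝕜] X) (hcont : ∀ i, Continuous (u i))
    (hchar : ∀ f : X →ₗ[𝕜] 𝕜, Continuous f ↔ ∀ i, Continuous (f ∘ u i))
    (y : ℕ → X →L[𝕜] 𝕜) (R : X → ℝ →₀ 𝕜) (z : X → ℕ → 𝕜) (Y : X → 𝕜)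
    (h : ∀ x : X, FPDecomp (fun n => y n x) (R x) (z x) (Y x)) :
    (∃ Yc : X →L[𝕜] 𝕜, ∀ x : X, Yc x = Y x) ∧
    (∀ α : ℝ, ∃ Rc : X →L[𝕜] 𝕜, ∀ x : X, Rc x = R x α) := by
  classical
  have hadd : ∀ x x' : X, R (x + x') = R x + R x' ∧ Y (x + x') = Y x + Y x' := by
    intro x x'
    have h2 := FPAux.fpd_add (h x) (h x')
    have hfun : (fun n => y n x + y n x') = fun n => y n (x + x') :=
      funext fun n => (map_add (y n) x x').symm
    rw [hfun] at h2
    exact FPAux.uniq (h (x + x')) h2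
  have hsmul : ∀ (a : 𝕜) (x : X), R (a • x) = a • R x ∧ Y (a • x) = a * Y x := by
    intro a x
    have h2 := FPAux.fpd_smul a (h x)
    have hfun : (fun n => a * y n x) = fun n => y n (a • x) := by
      funext n; rw [map_smul, smul_eq_mul]
    rw [hfun] at h2
    exact FPAux.uniq (h (a • x)) h2
  have hfac : ∀ i, (∃ G : Xi i →L[𝕜] 𝕜, ∀ ξ, G ξ = Y (u i ξ)) ∧
      ∀ α : ℝ, ∃ G : Xi i →L[𝕜] 𝕜, ∀ ξ, G ξ = R (u i ξ) α := by
    intro i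
    exact FPAux.frechet_main (fun n => (y n).comp ⟨u i, hcont i⟩)
      (fun ξ => R (u i ξ)) (fun ξ => z (u i ξ)) (fun ξ => Y (u i ξ))
      (fun ξ => h (u i ξ))
  constructor
  · set Ylin : X →ₗ[𝕜] 𝕜 :=
      { toFun := Y
        map_add' := fun x x' => (hadd x x').2
        map_smul' := fun a x => by simpa using (hsmul a x).2 } with hYlin
    have hcontY : Continuous Ylin := by
      rw [hchar]
      intro i
      obtain ⟨G, hG⟩ := (hfac i).1
      have heq : (⇑Ylin ∘ ⇑(u i)) = ⇑G := funext fun ξ => (hG ξ).symm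
      rw [heq]; exact G.continuous
    exact ⟨⟨Ylin, hcontY⟩, fun x => rfl⟩
  · intro α
    set Rlin : X →ₗ[𝕜] 𝕜 :=
      { toFun := fun x => R x α
        map_add' := fun x x' => by
          change R (x + x') α = R x α + R x' α
          rw [(hadd x x').1, Finsupp.add_apply]
        map_smul' := fun a x => by
          change R (a • x) α = a • R x α
          rw [(hsmul a x).1, Finsupp.smul_apply] } with hRlin
    have hcontR : Continuous Rlin := by
      rw [hchar]
      intro i
      obtain ⟨G, hG⟩ := (hfac i).2 α
      have heq : (⇑Rlin ∘ ⇑(u i)) = ⇑G := funext fun ξ => (hG ξ).symm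
      rw [heq]; exact G.continuous
    exact ⟨⟨Rlin, hcontR⟩, fun x => rfl⟩
end
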